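/- Let G be a simple graph embedded on the torus such that G has a 2-cut and the dual graph G* is simple. Then G* has a vertex cut of size at most 5. Equivalently, no 6-connected toroidal graph is the simple dual of a toroidal graph with a 2-cut. -/

import Mathlib

/-- A connected oriented combinatorial embedding of a (multi)graph, given by a
finite set of darts (directed edges), a rotation permutation `σ` (next dart in
the cyclic order around the tail vertex) and a fixed-point-free involution `α`
(dart reversal). -/
structure EmbGraph where
  D : Type
  finD : Finite D
  σ : Equiv.Perm D
  α : Equiv.Perm D
  α_invol : ∀ d, α (α d) = d
  α_ne : ∀ d, α d ≠ d

namespace EmbGraph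

variable (G : EmbGraph)

instance : Finite G.D := G.finD

/-- The setoid identifying darts in a common cycle of a permutation. -/
def sameCycleSetoid (f : Equiv.Perm G.D) : Setoid G.D :=
  ⟨f.SameCycle, ⟨fun _ => Equiv.Perm.SameCycle.refl f _, fun h => h.symm, fun h h' => h.trans h'⟩⟩

/-- The face permutation: the successor of the directed edge `(u,v)` in its
facial walk is the next edge after `(v,u)` in the rotation around `v`. -/
def facePerm : Equiv.Perm G.D := G.σ * G.α

/-- Vertices are the orbits of `σ`. -/
def Vert := Quotient (G.sameCycleSetoid G.σ)
/-- Edges are the orbits of `α`. -/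
def Edge := Quotient (G.sameCycleSetoid G.α)
/-- Faces are the orbits of the face permutation. -/
def Face := Quotient (G.sameCycleSetoid G.facePerm)

/-- The tail vertex of a dart. -/
def vtx (d : G.D) : G.Vert := Quotient.mk (G.sameCycleSetoid G.σ) d
def edgeOf (d : G.D) : G.Edge := Quotient.mk (G.sameCycleSetoid G.α) d
def faceOf (d : G.D) : G.Face := Quotient.mk (G.sameCycleSetoid G.facePerm) d

instance : Finite G.Vert := Quotient.finite _
instance : Finite G.Edge := Quotient.finite _
instance : Finite G.Face := Quotient.finite _

noncomputable def numVertices : ℕ := Nat.card G.Vert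
noncomputable def numEdges : ℕ := Nat.card G.Edge
noncomputable def numFaces : ℕ := Nat.card G.Face

/-- The Euler characteristic `v - e + f`; the genus `g` of the embedding is
defined by `v - e + f = 2 - 2g`. -/
noncomputable def eulerChar : ℤ := (G.numVertices : ℤ) - (G.numEdges : ℤ) + (G.numFaces : ℤ)

/-- The embedded graph is connected. -/
def Connected : Prop :=
  ∀ a b : G.D, Relation.EqvGen (fun x y => y = G.σ x ∨ y = G.α x) a b

/-- The degree of a vertex: the number of darts with this tail. -/
noncomputable def degree (v : G.Vert) : ℕ := Nat.card {d : G.D // G.vtx d = v}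

/-- The size of a face: the number of darts in its facial walk. -/
noncomputable def faceSize (f : G.Face) : ℕ := Nat.card {d : G.D // G.faceOf d = f}

/-- The underlying simple graph of the embedded graph. -/
def underlying : SimpleGraph G.Vert where
  Adj u v := u ≠ v ∧ ∃ d, G.vtx d = u ∧ G.vtx (G.α d) = v
  symm := ⟨by
    rintro u v ⟨huv, d, hd1, hd2⟩
    exact ⟨huv.symm, G.α d, hd2, by rw [G.α_invol]; exact hd1⟩⟩
  loopless := ⟨fun v h => h.1 rfl⟩

/-- The embedded graph is a simple graph: no loops and no multiple edges. -/
def IsSimple : Prop :=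
  (∀ d, G.vtx d ≠ G.vtx (G.α d)) ∧
    ∀ d d', G.vtx d = G.vtx d' → G.vtx (G.α d) = G.vtx (G.α d') → G.edgeOf d = G.edgeOf d'

/-- The dual graph: vertices are the faces of `G`, two faces being adjacent
if they share an edge. -/
def dualGraph : SimpleGraph G.Face where
  Adj f f' := f ≠ f' ∧ ∃ d, G.faceOf d = f ∧ G.faceOf (G.α d) = f'
  symm := ⟨by
    rintro f f' ⟨hff, d, hd1, hd2⟩
    exact ⟨hff.symm, G.α d, hd2, by rw [G.α_invol]; exact hd1⟩⟩
  loopless := ⟨fun f h => h.1 rfl⟩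

/-- The dual (multi)graph is simple: no face shares an edge with itself, and no
two faces share more than one edge. -/
def DualSimple : Prop :=
  (∀ d, G.faceOf d ≠ G.faceOf (G.α d)) ∧
    ∀ d d', G.faceOf d = G.faceOf d' → G.faceOf (G.α d) = G.faceOf (G.α d') →
      G.edgeOf d = G.edgeOf d'

/-- The dual embedded graph. -/
def dualMap : EmbGraph :=
  ⟨G.D, G.finD, G.σ * G.α, G.α, G.α_invol, G.α_ne⟩

/-- Identifying the angle following dart `a` with the angle following dart `b`:
the rotation is composed with the transposition of `a` and `b`. -/
noncomputable def identifyAngles (a b : G.D) : EmbGraph :=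
  letI : DecidableEq G.D := Classical.decEq _
  ⟨G.D, G.finD, G.σ * Equiv.swap a b, G.α, G.α_invol, G.α_ne⟩

/-- The H-operation applied to the edge given by the dart `d = (x,y)`, where
`x` and `y` have degree `3`.  With rotations `y,w',v` around `x` and `x,w,v'`
around `y`, it identifies the angle of `v` preceding `x` with the angle of `v'`
preceding `y`, and the angle of `w` following `y` with the angle of `w'`
following `x`, merging `v` with `v'` and `w` with `w'`. -/
noncomputable def Hop (d : G.D) : EmbGraph :=
  (G.identifyAngles (G.σ⁻¹ (G.α (G.σ (G.σ d)))) (G.σ⁻¹ (G.α (G.σ (G.σ (G.α d)))))).identifyAngles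
    (G.α (G.σ (G.α d))) (G.α (G.σ d))

end EmbGraph

/-- `S` is a vertex cut-set of `H`: deleting `S` leaves two vertices with no
path between them. -/
def IsCutSet {W : Type*} (H : SimpleGraph W) (S : Set W) : Prop :=
  ∃ a b : ↥(Sᶜ), ¬ (H.induce Sᶜ).Reachable a b

/-- `H` is `n`-connected: it has more than `n` vertices and no cut-set with
fewer than `n` vertices. -/
def KConnected {W : Type*} (n : ℕ) (H : SimpleGraph W) : Prop :=
  n < Nat.card W ∧ ∀ S : Set W, S.ncard < n → ¬ IsCutSet H S

/-- The set of genera `s` for which a simple `c`-connected embedded graph of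
genus `s` with a simple dual having a vertex cut of size `k` exists. -/
def deltaSet (k c : ℕ) : Set ℕ :=
  {s | ∃ G : EmbGraph, G.Connected ∧ G.IsSimple ∧ KConnected c G.underlying ∧
      G.eulerChar = 2 - 2 * (s : ℤ) ∧ G.DualSimple ∧
      ∃ S : Set G.Face, S.ncard = k ∧ IsCutSet G.dualGraph S}

/-- `δ_k(c)`: the minimum genus of a simple `c`-connected embedded graph whose
simple dual has a vertex cut of size `k`. -/
noncomputable def delta (k c : ℕ) : ℕ := sInf (deltaSet k c)


namespace EmbGraph

open Equiv Equiv.Perm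

variable {G : EmbGraph}

lemma alpha_alpha (d : G.D) : G.α (G.α d) = d := G.α_invol d

lemma vtx_eq_iff {d d' : G.D} : G.vtx d = G.vtx d' ↔ G.σ.SameCycle d d' :=
  ⟨Quotient.exact, fun h => Quot.sound h⟩

lemma faceOf_eq_iff {d d' : G.D} : G.faceOf d = G.faceOf d' ↔ G.facePerm.SameCycle d d' :=
  ⟨Quotient.exact, fun h => Quot.sound h⟩

lemma edgeOf_eq_iff {d d' : G.D} : G.edgeOf d = G.edgeOf d' ↔ G.α.SameCycle d d' :=
  ⟨Quotient.exact, fun h => Quot.sound h⟩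

lemma vtx_sigma (d : G.D) : G.vtx (G.σ d) = G.vtx d :=
  vtx_eq_iff.2 (sameCycle_apply_left.2 (SameCycle.refl _ _))

lemma facePerm_apply (d : G.D) : G.facePerm d = G.σ (G.α d) := rfl

lemma vtx_facePerm (d : G.D) : G.vtx (G.facePerm d) = G.vtx (G.α d) := vtx_sigma _

lemma faceOf_facePerm (d : G.D) : G.faceOf (G.facePerm d) = G.faceOf d :=
  faceOf_eq_iff.2 (sameCycle_apply_left.2 (SameCycle.refl _ _))

lemma faceOf_pow (n : ℕ) (d : G.D) : G.faceOf ((G.facePerm ^ n) d) = G.faceOf d :=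
  faceOf_eq_iff.2 (sameCycle_pow_left.2 (SameCycle.refl _ _))

lemma edgeOf_alpha (d : G.D) : G.edgeOf (G.α d) = G.edgeOf d :=
  edgeOf_eq_iff.2 (sameCycle_apply_left.2 (SameCycle.refl _ _))

lemma alpha_pow_cases : ∀ (n : ℕ) (d : G.D), (G.α ^ n) d = d ∨ (G.α ^ n) d = G.α d := by
  intro n
  induction n with
  | zero => intro d; left; rfl
  | succ n ih =>
      intro d
      rw [pow_succ', Perm.mul_apply]
      rcases ih d with h | h
      · right; rw [h]
      · left; rw [h, alpha_alpha]

lemma edge_eq_cases {d d' : G.D} (h : G.edgeOf d' = G.edgeOf d) : d' = d ∨ d' = G.α d := by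
  have hsc : G.α.SameCycle d d' := (edgeOf_eq_iff.1 h).symm
  obtain ⟨i, _, hi⟩ := hsc.exists_pow_eq'
  rcases alpha_pow_cases i d with h' | h'
  · left; rw [← hi, h']
  · right; rw [← hi, h']

lemma dart_eq (hs : G.IsSimple) {d d' : G.D} (h1 : G.vtx d = G.vtx d')
    (h2 : G.vtx (G.α d) = G.vtx (G.α d')) : d = d' := by
  rcases edge_eq_cases (hs.2 d d' h1 h2).symm with h | h
  · exact h.symm
  · exfalso; exact hs.1 d (by rw [h] at h1; exact h1)

lemma underlying_adj (hs : G.IsSimple) (d : G.D) :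
    G.underlying.Adj (G.vtx d) (G.vtx (G.α d)) := ⟨hs.1 d, d, rfl, rfl⟩

lemma exists_dart (v : G.Vert) : ∃ d, G.vtx d = v :=
  Quotient.inductionOn v fun d => ⟨d, rfl⟩

lemma degree_eq_ncard (v : G.Vert) : G.degree v = {d | G.vtx d = v}.ncard :=
  Nat.card_coe_set_eq _

lemma faceSize_eq_ncard (f : G.Face) : G.faceSize f = {d | G.faceOf d = f}.ncard :=
  Nat.card_coe_set_eq _

/-- If some dart of the face of `d` lies in `T` and `T` is closed under the face
permutation within this face, then every dart of the face lies in `T`. -/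
lemma face_orbit_exists_pow {d d' : G.D} (h : G.faceOf d' = G.faceOf d) :
    ∃ n : ℕ, (G.facePerm ^ n) d = d' := by
  obtain ⟨i, _, hi⟩ := (faceOf_eq_iff.1 h).symm.exists_pow_eq'
  exact ⟨i, hi⟩

/-- Core crossing lemma: if a face has a dart with tail in `U` and one with tail
outside `U`, it has a dart with tail in `U` whose head is outside `U`. -/
lemma exists_crossing_in_face (U : Set G.Vert) {f : G.Face} {d₀ d₁ : G.D}
    (h₀ : G.faceOf d₀ = f) (hd₀ : G.vtx d₀ ∈ U)
    (h₁ : G.faceOf d₁ = f) (hd₁ : G.vtx d₁ ∉ U) :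
    ∃ d, G.faceOf d = f ∧ G.vtx d ∈ U ∧ G.vtx (G.α d) ∉ U := by
  by_contra hcon
  push_neg at hcon
  have key : ∀ n : ℕ, G.vtx ((G.facePerm ^ n) d₀) ∈ U := by
    intro n
    induction n with
    | zero => simpa using hd₀
    | succ n ih =>
        have hface : G.faceOf ((G.facePerm ^ n) d₀) = f := by rw [faceOf_pow, h₀]
        have := hcon _ hface ih
        rw [pow_succ', Perm.mul_apply, vtx_facePerm]
        exact this
  obtain ⟨n, hn⟩ := face_orbit_exists_pow (h₁.trans h₀.symm)
  exact hd₁ (hn ▸ key n)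

/-- In-crossing version. -/
lemma exists_crossing_in_face' (U : Set G.Vert) {f : G.Face} {d₀ d₁ : G.D}
    (h₀ : G.faceOf d₀ = f) (hd₀ : G.vtx d₀ ∈ U)
    (h₁ : G.faceOf d₁ = f) (hd₁ : G.vtx d₁ ∉ U) :
    ∃ d, G.faceOf d = f ∧ G.vtx d ∉ U ∧ G.vtx (G.α d) ∈ U := by
  classical
  obtain ⟨d, hdf, hd1, hd2⟩ := exists_crossing_in_face Uᶜ h₁ hd₁ h₀ (by simpa using hd₀)
  exact ⟨d, hdf, hd1, by simpa using hd2⟩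

/-- A fixed point of the face permutation is alone in its face. -/
lemma face_eq_singleton_of_fixed {d : G.D} (h : G.facePerm d = d) :
    {d' | G.faceOf d' = G.faceOf d} = {d} := by
  ext d'
  simp only [Set.mem_setOf_eq, Set.mem_singleton_iff]
  constructor
  · intro hd'
    obtain ⟨n, hn⟩ := face_orbit_exists_pow hd'
    have : ∀ m : ℕ, (G.facePerm ^ m) d = d := by
      intro m
      induction m with
      | zero => rfl
      | succ m ih => rw [pow_succ', Perm.mul_apply, ih]; exact h
    rw [← hn, this]
  · rintro rfl; rfl

/-- Existence of a crossing dart for a nonempty proper tail-set, by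
connectivity. -/
lemma exists_crossing_dart (hconn : G.Connected) (W : Set G.Vert)
    {d₀ d₁ : G.D} (h₀ : G.vtx d₀ ∈ W) (h₁ : G.vtx d₁ ∉ W) :
    ∃ d, G.vtx d ∈ W ∧ G.vtx (G.α d) ∉ W := by
  by_contra hcon
  push_neg at hcon
  have hiff : ∀ d : G.D, G.vtx d ∈ W ↔ G.vtx (G.α d) ∈ W := by
    intro d
    constructor
    · exact hcon d
    · intro h
      have := hcon (G.α d) h
      rwa [alpha_alpha] at this
  have key : ∀ p q : G.D, Relation.EqvGen (fun x y => y = G.σ x ∨ y = G.α x) p q →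
      (G.vtx p ∈ W ↔ G.vtx q ∈ W) := by
    intro p q h
    induction h with
    | rel p q hpq =>
        rcases hpq with h | h
        · rw [h, vtx_sigma]
        · rw [h, ← hiff]
    | refl => exact Iff.rfl
    | symm _ _ _ ih => exact ih.symm
    | trans _ _ _ _ _ ih1 ih2 => exact ih1.trans ih2
  exact h₁ ((key d₀ d₁ (hconn d₀ d₁)).1 h₀)

end EmbGraph
/-- Counting a type by fibers of a map. -/
lemma nat_card_fibers {X Y : Type*} [Finite X] [Fintype Y] (q : X → Y) :
    Nat.card X = ∑ y : Y, Nat.card {x // q x = y} := by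
  classical
  cases nonempty_fintype X
  rw [Nat.card_eq_fintype_card]
  have h := Fintype.card_congr (Equiv.sigmaFiberEquiv q).symm
  rw [h, Fintype.card_sigma]
  simp [Nat.card_eq_fintype_card]

/-- Counting a subtype by fibers of a map. -/
lemma nat_card_fibers' {X Y : Type*} [Finite X] [Fintype Y] (q : X → Y) (P : X → Prop) :
    Nat.card {x // P x} = ∑ y : Y, Nat.card {x // P x ∧ q x = y} := by
  classical
  rw [nat_card_fibers (fun z : {x // P x} => q z.1)]
  refine Finset.sum_congr rfl fun y _ => Nat.card_congr ?_
  exact { toFun := fun z => ⟨z.1.1, z.1.2, z.2⟩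
          invFun := fun z => ⟨⟨z.1, z.2.1⟩, z.2.2⟩
          left_inv := fun ⟨⟨x, hx⟩, h⟩ => rfl
          right_inv := fun ⟨x, hx, h⟩ => rfl }

lemma ncard_eq_nat_card {X : Type*} (s : Set X) : s.ncard = Nat.card {x // x ∈ s} :=
  (Nat.card_coe_set_eq _).symm

namespace EmbGraph

open Equiv Equiv.Perm

variable {G : EmbGraph}

lemma exists_edge_dart (e : G.Edge) : ∃ d, G.edgeOf d = e :=
  Quotient.inductionOn e fun d => ⟨d, rfl⟩

lemma exists_face_dart (f : G.Face) : ∃ d, G.faceOf d = f :=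
  Quotient.inductionOn f fun d => ⟨d, rfl⟩

lemma edge_fiber_eq (d : G.D) : {d' | G.edgeOf d' = G.edgeOf d} = {d, G.α d} := by
  ext d'
  simp only [Set.mem_setOf_eq, Set.mem_insert_iff, Set.mem_singleton_iff]
  constructor
  · exact edge_eq_cases
  · rintro (rfl | rfl)
    · rfl
    · exact edgeOf_alpha d

lemma card_edge_fiber (e : G.Edge) : Nat.card {d // G.edgeOf d = e} = 2 := by
  obtain ⟨d, hd⟩ := exists_edge_dart e
  have h1 : ∀ d', G.edgeOf d' = e ↔ d' ∈ ({d, G.α d} : Set G.D) := by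
    intro d'; rw [← hd]; exact Set.ext_iff.1 (edge_fiber_eq d) d'
  calc Nat.card {d' // G.edgeOf d' = e}
      = Nat.card ({d, G.α d} : Set G.D) := Nat.card_congr (Equiv.subtypeEquivRight h1)
    _ = 2 := by rw [Nat.card_coe_set_eq, Set.ncard_pair (Ne.symm (G.α_ne d))]

lemma card_D_eq_two_mul_edges [Fintype G.Edge] : Nat.card G.D = 2 * Nat.card G.Edge := by
  rw [nat_card_fibers G.edgeOf]
  simp only [card_edge_fiber]
  rw [Finset.sum_const, Finset.card_univ, smul_eq_mul, mul_comm, Nat.card_eq_fintype_card]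

lemma card_D_eq_sum_degree [Fintype G.Vert] : Nat.card G.D = ∑ v : G.Vert, G.degree v :=
  nat_card_fibers G.vtx

lemma card_D_eq_sum_faceSize [Fintype G.Face] : Nat.card G.D = ∑ f : G.Face, G.faceSize f :=
  nat_card_fibers G.faceOf

lemma three_le_degree (hs : G.IsSimple) (hd : G.DualSimple) (v : G.Vert) :
    3 ≤ G.degree v := by
  obtain ⟨d, rfl⟩ := exists_dart v
  by_contra hlt
  push_neg at hlt
  by_cases h1 : G.σ d = d
  · refine hd.1 d ?_
    refine (faceOf_eq_iff.2 ⟨1, ?_⟩).symm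
    simp only [zpow_one]
    rw [facePerm_apply, alpha_alpha, h1]
  · by_cases h2 : G.σ (G.σ d) = d
    · -- degree two case
      have hf1 : G.faceOf (G.α d) = G.faceOf (G.σ d) := by
        refine faceOf_eq_iff.2 ⟨1, ?_⟩
        simp only [zpow_one]
        rw [facePerm_apply, alpha_alpha]
      have hf2 : G.faceOf (G.α (G.σ d)) = G.faceOf d := by
        refine faceOf_eq_iff.2 ⟨1, ?_⟩
        simp only [zpow_one]
        rw [facePerm_apply, alpha_alpha, h2]
      have hed : G.edgeOf d = G.edgeOf (G.α (G.σ d)) := by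
        refine hd.2 d (G.α (G.σ d)) hf2.symm ?_
        rw [alpha_alpha, hf1]
      rcases edge_eq_cases ((edgeOf_alpha (G.σ d)).symm.trans hed.symm : G.edgeOf (G.σ d) = G.edgeOf d) with h | h
      · exact h1 h
      · exact hs.1 d (by rw [← h, vtx_sigma])
    · -- three distinct darts in the fiber
      have hne12 : d ≠ G.σ d := fun h => h1 h.symm
      have hne13 : d ≠ G.σ (G.σ d) := fun h => h2 h.symm
      have hne23 : G.σ d ≠ G.σ (G.σ d) := fun h => h1 (G.σ.injective h).symm
      have hsub : ({d, G.σ d, G.σ (G.σ d)} : Set G.D) ⊆ {d' | G.vtx d' = G.vtx d} := by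
        rintro d' (rfl | rfl | rfl) <;> simp [Set.mem_setOf_eq, vtx_sigma]
      have h3 : ({d, G.σ d, G.σ (G.σ d)} : Set G.D).ncard = 3 :=
        Set.ncard_eq_three.2 ⟨d, G.σ d, G.σ (G.σ d), hne12, hne13, hne23, rfl⟩
      have : 3 ≤ G.degree (G.vtx d) := by
        rw [degree_eq_ncard, ← h3]
        exact Set.ncard_le_ncard hsub (Set.toFinite _)
      omega

end EmbGraph
section SetUtil

variable {X : Type*} [Finite X]

lemma mem_eq_of_ncard_le_one {s : Set X} (h : s.ncard ≤ 1) {u v : X}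
    (hu : u ∈ s) (hv : v ∈ s) : u = v := by
  by_contra hne
  have h2 : 2 ≤ s.ncard := by
    rw [← Set.ncard_pair hne]
    exact Set.ncard_le_ncard (by rintro w (rfl | rfl) <;> assumption) (Set.toFinite _)
  omega

lemma two_le_ncard_of_mem {s : Set X} {u v : X} (h : u ≠ v) (hu : u ∈ s) (hv : v ∈ s) :
    2 ≤ s.ncard := by
  rw [← Set.ncard_pair h]
  exact Set.ncard_le_ncard (by rintro w (rfl | rfl) <;> assumption) (Set.toFinite _)

lemma three_le_ncard_of_mem {s : Set X} {u v w : X} (huv : u ≠ v) (huw : u ≠ w) (hvw : v ≠ w)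
    (hu : u ∈ s) (hv : v ∈ s) (hw : w ∈ s) : 3 ≤ s.ncard := by
  have h3 : ({u, v, w} : Set X).ncard = 3 := Set.ncard_eq_three.2 ⟨u, v, w, huv, huw, hvw, rfl⟩
  rw [← h3]
  exact Set.ncard_le_ncard (by rintro z (rfl | rfl | rfl) <;> assumption) (Set.toFinite _)

end SetUtil

section GraphUtil

variable {W : Type*}

lemma reach_eq_of_isolated (H : SimpleGraph W) (v : W)
    (hiso : ∀ w, ¬ H.Adj v w) {u : W} (h : H.Reachable v u) : u = v := by
  obtain ⟨p⟩ := h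
  cases p with
  | nil => rfl
  | cons h' _ => exact absurd h' (hiso _)

lemma isCutSet_of_isolated (H : SimpleGraph W) (S : Set W) (f g : W)
    (hf : f ∉ S) (hg : g ∉ S) (hfg : g ≠ f)
    (hiso : ∀ w : W, w ∉ S → ¬ H.Adj f w) : IsCutSet H S := by
  refine ⟨⟨f, hf⟩, ⟨g, hg⟩, fun hr => ?_⟩
  have heq := reach_eq_of_isolated (H.induce Sᶜ) ⟨f, hf⟩ (fun w => ?_) hr
  · exact hfg (congrArg Subtype.val heq)
  · intro hadj
    rw [SimpleGraph.comap_adj] at hadj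
    exact hiso w.1 w.2 hadj

end GraphUtil

namespace EmbGraph

open Equiv Equiv.Perm

variable {G : EmbGraph}

lemma nbhd_ncard_le_faceSize (f : G.Face) :
    {g | G.dualGraph.Adj f g}.ncard ≤ G.faceSize f := by
  have hsub : {g | G.dualGraph.Adj f g} ⊆ (fun d => G.faceOf (G.α d)) '' {d | G.faceOf d = f} := by
    rintro g ⟨hne, d, hd1, hd2⟩
    exact ⟨d, hd1, hd2⟩
  calc {g | G.dualGraph.Adj f g}.ncard
      ≤ ((fun d => G.faceOf (G.α d)) '' {d | G.faceOf d = f}).ncard :=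
        Set.ncard_le_ncard hsub (Set.toFinite _)
    _ ≤ {d | G.faceOf d = f}.ncard := Set.ncard_image_le (Set.toFinite _)
    _ = G.faceSize f := (faceSize_eq_ncard f).symm

lemma faceSize_complete (hd : G.DualSimple)
    (hcomp : ∀ f g : G.Face, f ≠ g → G.dualGraph.Adj f g) (f : G.Face) :
    G.faceSize f + 1 = Nat.card G.Face := by
  have hbij : Function.Bijective (fun d : {d // G.faceOf d = f} =>
      (⟨G.faceOf (G.α d.1), fun h => hd.1 d.1 (by rw [d.2, h])⟩ : {g // g ≠ f})) := by
    constructor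
    · rintro ⟨d, hdf⟩ ⟨d', hdf'⟩ hh
      have h2 : G.faceOf (G.α d) = G.faceOf (G.α d') := congrArg Subtype.val hh
      have hed := hd.2 d d' (hdf.trans hdf'.symm) h2
      rcases edge_eq_cases hed.symm with h | h
      · exact Subtype.ext h.symm
      · exfalso
        refine hd.1 d ?_
        rw [← h, hdf', hdf]
    · rintro ⟨g, hg⟩
      obtain ⟨-, d, hd1, hd2⟩ := hcomp f g (Ne.symm hg)
      exact ⟨⟨d, hd1⟩, Subtype.ext hd2⟩
  have h1 : G.faceSize f = Nat.card {g // g ≠ f} := Nat.card_eq_of_bijective _ hbij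
  have h2 : Nat.card {g // g ≠ f} = ({f}ᶜ : Set G.Face).ncard := by
    rw [← Nat.card_coe_set_eq]
    exact Nat.card_congr (Equiv.subtypeEquivRight (by simp))
  have h3 := Set.ncard_add_ncard_compl ({f} : Set G.Face)
  rw [Set.ncard_singleton] at h3
  rw [h1, h2]
  omega

/-- The reachability class of `v` after deleting `S`. -/
def cls (G : EmbGraph) (S : Set G.Vert) (v : G.Vert) : Set G.Vert :=
  {u | ∃ (hu : u ∈ Sᶜ) (hv : v ∈ Sᶜ), (G.underlying.induce Sᶜ).Reachable ⟨u, hu⟩ ⟨v, hv⟩}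

variable {S : Set G.Vert}

lemma mem_cls_self {v : G.Vert} (hv : v ∉ S) : v ∈ G.cls S v := ⟨hv, hv, .refl _⟩

lemma cls_not_mem {u v : G.Vert} (hu : u ∈ G.cls S v) : u ∉ S := hu.1

lemma cls_eq_of_mem {u v : G.Vert} (hu : u ∈ G.cls S v) : G.cls S u = G.cls S v := by
  obtain ⟨hu', hv', hr⟩ := hu
  ext w
  constructor
  · rintro ⟨hw, hv2, hrb⟩
    exact ⟨hw, hv', hrb.trans hr⟩
  · rintro ⟨hw, hv2, hrb⟩
    exact ⟨hw, hu', hrb.trans hr.symm⟩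

lemma cls_eq_cls {u v v' : G.Vert} (h1 : u ∈ G.cls S v) (h2 : u ∈ G.cls S v') :
    G.cls S v = G.cls S v' := by
  rw [← cls_eq_of_mem h1, cls_eq_of_mem h2]

lemma adj_mem_cls {u v w : G.Vert} (hu : u ∈ G.cls S v)
    (hadj : G.underlying.Adj w u) (hw : w ∉ S) : w ∈ G.cls S v := by
  obtain ⟨hu', hv', hr⟩ := hu
  refine ⟨hw, hv', SimpleGraph.Reachable.trans ?_ hr⟩
  refine SimpleGraph.Adj.reachable ?_
  rw [SimpleGraph.comap_adj]
  exact hadj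

lemma head_mem_cls (hs : G.IsSimple) {v : G.Vert} {d : G.D}
    (h1 : G.vtx d ∈ G.cls S v) (h2 : G.vtx (G.α d) ∉ S) : G.vtx (G.α d) ∈ G.cls S v :=
  adj_mem_cls h1 (underlying_adj hs d).symm h2

lemma tail_mem_cls (hs : G.IsSimple) {v : G.Vert} {d : G.D}
    (h1 : G.vtx (G.α d) ∈ G.cls S v) (h2 : G.vtx d ∉ S) : G.vtx d ∈ G.cls S v := by
  have := head_mem_cls hs (d := G.α d) h1 (by rwa [alpha_alpha])
  rwa [alpha_alpha] at this

/-- In/out balance around a face. -/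
lemma card_heads_eq_card_tails (U : Set G.Vert) (f : G.Face) :
    Nat.card {d // G.faceOf d = f ∧ G.vtx (G.α d) ∈ U} =
    Nat.card {d // G.faceOf d = f ∧ G.vtx d ∈ U} := by
  refine Nat.card_congr ?_
  refine
    { toFun := fun z => ⟨G.facePerm z.1,
        by rw [faceOf_facePerm]; exact z.2.1, by rw [vtx_facePerm]; exact z.2.2⟩
      invFun := fun z => ⟨G.facePerm⁻¹ z.1, ?_, ?_⟩
      left_inv := fun z => Subtype.ext (G.facePerm.symm_apply_apply z.1)
      right_inv := fun z => Subtype.ext (G.facePerm.apply_symm_apply z.1) }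
  · have := faceOf_facePerm (G.facePerm⁻¹ z.1)
    rw [show G.facePerm (G.facePerm⁻¹ z.1) = z.1 from G.facePerm.apply_symm_apply z.1] at this
    rw [← this]; exact z.2.1
  · have := vtx_facePerm (G.facePerm⁻¹ z.1)
    rw [show G.facePerm (G.facePerm⁻¹ z.1) = z.1 from G.facePerm.apply_symm_apply z.1] at this
    rw [← this]; exact z.2.2

end EmbGraph
namespace EmbGraph

open Equiv Equiv.Perm

variable {G : EmbGraph}

lemma crossing_pair_contradiction (hd : G.DualSimple) (W : Set G.Vert)
    {d₀ d' : G.D} (h₀ : G.vtx d₀ ∈ W) (h₀' : G.vtx (G.α d₀) ∉ W)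
    (hX : ∀ d, G.vtx d ∈ W → G.vtx (G.α d) ∉ W → d = d₀ ∨ d = d') : False := by
  obtain ⟨e1, he1f, he1t, he1h⟩ :=
    exists_crossing_in_face' W rfl h₀ (faceOf_facePerm d₀) (by rwa [vtx_facePerm])
  rcases hX (G.α e1) he1h (by rwa [alpha_alpha]) with h | h
  · -- e1 = α d₀
    refine hd.1 d₀ ?_
    have he : e1 = G.α d₀ := by rw [← h, alpha_alpha]
    rw [← he, he1f]
  · have he : e1 = G.α d' := by rw [← h, alpha_alpha]
    have hA : G.faceOf (G.α d') = G.faceOf d₀ := by rw [← he, he1f]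
    have hd'W : G.vtx d' ∈ W := h ▸ he1h
    have hd'W' : G.vtx (G.α d') ∉ W := by rw [← he]; exact he1t
    obtain ⟨e2, he2f, he2t, he2h⟩ :=
      exists_crossing_in_face W (faceOf_facePerm (G.α d₀))
        (by rw [vtx_facePerm, alpha_alpha]; exact h₀) rfl h₀'
    rcases hX e2 he2t he2h with h2 | h2
    · have := he2f
      rw [h2] at this
      exact hd.1 d₀ this
    · have hB : G.faceOf d' = G.faceOf (G.α d₀) := by rw [← h2, he2f]
      have hed : G.edgeOf (G.α d') = G.edgeOf d₀ := by
        refine hd.2 (G.α d') d₀ hA ?_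
        rw [alpha_alpha, hB]
      rcases edge_eq_cases hed with h3 | h3
      · have : d' = G.α d₀ := by rw [← h3, alpha_alpha]
        rw [this] at hd'W
        exact h₀' hd'W
      · have : d' = d₀ := G.α.injective h3
        rw [this] at hA
        exact hd.1 d₀ hA.symm

lemma cubic_no_two_cut (hconn : G.Connected) (hs : G.IsSimple) (hd : G.DualSimple)
    (hdeg : ∀ v, G.degree v = 3)
    (hcut : ∃ S : Set G.Vert, S.ncard = 2 ∧ IsCutSet G.underlying S) : False := by
  classical
  obtain ⟨S, hS2, a, b, hnr⟩ := hcut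
  rw [Set.ncard_eq_two] at hS2
  obtain ⟨x, y, hxy, rfl⟩ := hS2
  set B : Set G.Vert := G.cls {x, y} b.1 with hBdef
  have hbB : (b : G.Vert) ∈ B := mem_cls_self b.2
  have haB : (a : G.Vert) ∉ B := by
    rintro ⟨ha', hb', hr⟩
    exact hnr hr
  set P : G.Vert → Set G.D := fun z => {d | G.vtx d = z ∧ G.vtx (G.α d) ∈ B} with hPdef
  set c : G.Vert → Prop := fun z => 2 ≤ (P z).ncard with hcdef
  set W : Set G.Vert := B ∪ {v | (v = x ∧ c x) ∨ (v = y ∧ c y)} with hWdef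
  set piece : G.Vert → Set G.D := fun z =>
    {d | (c z ∧ G.vtx d = z ∧ d ∉ P z) ∨ (¬ c z ∧ d ∈ G.α '' P z)} with hpiecedef
  -- piece bound
  have hpiece : ∀ z, (piece z).ncard ≤ 1 := by
    intro z
    by_cases hc : c z
    · have hpz : piece z = {d | G.vtx d = z} \ P z := by
        ext d
        simp only [hpiecedef, Set.mem_setOf_eq, Set.mem_diff, hc, true_and, not_true_eq_false,
          false_and, or_false]
      have hsub : P z ⊆ {d | G.vtx d = z} := fun d hd' => hd'.1
      have h3 : ({d | G.vtx d = z} : Set G.D).ncard = 3 := by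
        rw [← degree_eq_ncard, hdeg]
      rw [hpz, Set.ncard_diff hsub (Set.toFinite _), h3]
      have := hc
      rw [hcdef] at this
      omega
    · have hpz : piece z = G.α '' P z := by
        ext d
        simp only [hpiecedef, Set.mem_setOf_eq, hc, false_and, true_and, not_false_eq_true,
          false_or]
      rw [hpz]
      have h1 := Set.ncard_image_le (f := G.α) (s := P z) (Set.toFinite _)
      have h2 : ¬ (2 ≤ (P z).ncard) := hc
      omega
  -- covering
  have hcover : ∀ d, G.vtx d ∈ W → G.vtx (G.α d) ∉ W → d ∈ piece x ∪ piece y := by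
    intro d hdW hdW'
    have hWB : B ⊆ W := Set.subset_union_left
    rcases hdW with hB | hxyW
    · -- tail in B
      have hheadB : G.vtx (G.α d) ∉ B := fun h => hdW' (hWB h)
      have hheadS : G.vtx (G.α d) ∈ ({x, y} : Set G.Vert) := by
        by_contra hns
        exact hheadB (head_mem_cls hs hB hns)
      have hP : G.α d ∈ P (G.vtx (G.α d)) := ⟨rfl, by rwa [alpha_alpha]⟩
      have himg : d ∈ G.α '' P (G.vtx (G.α d)) :=
        ⟨G.α d, hP, alpha_alpha d⟩
      rcases hheadS with hhx | hhy
      · left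
        have hnc : ¬ c x := by
          intro hcx
          exact hdW' (Or.inr (Or.inl ⟨hhx, hcx⟩))
        exact Or.inr ⟨hnc, by rwa [hhx] at himg⟩
      · right
        have hhy' : G.vtx (G.α d) = y := hhy
        have hnc : ¬ c y := by
          intro hcy
          exact hdW' (Or.inr (Or.inr ⟨hhy', hcy⟩))
        exact Or.inr ⟨hnc, by rwa [hhy'] at himg⟩
    · rcases hxyW with ⟨hvx, hcx⟩ | ⟨hvy, hcy⟩
      · left
        refine Or.inl ⟨hcx, hvx, fun hP => ?_⟩
        exact hdW' (hWB hP.2)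
      · right
        refine Or.inl ⟨hcy, hvy, fun hP => ?_⟩
        exact hdW' (hWB hP.2)
  -- X nonempty
  obtain ⟨db, hdb⟩ := exists_dart (b : G.Vert)
  obtain ⟨da, hda⟩ := exists_dart (a : G.Vert)
  have haW : (a : G.Vert) ∉ W := by
    rintro (h | h)
    · exact haB h
    · have ha2 := a.2
      rcases h with ⟨h1, -⟩ | ⟨h1, -⟩
      · exact ha2 (by rw [h1]; exact Set.mem_insert _ _)
      · exact ha2 (by rw [h1]; exact Set.mem_insert_of_mem _ rfl)
  obtain ⟨d₀, hd₀W, hd₀W'⟩ :=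
    exists_crossing_dart hconn W (d₀ := db) (d₁ := da)
      (by rw [hdb]; exact Set.subset_union_left hbB) (by rwa [hda])
  -- extract pair
  have hselect : ∀ z : G.Vert, ∃ w, piece z ⊆ {w} := by
    intro z
    rcases Set.eq_empty_or_nonempty (piece z) with h | ⟨w, hw⟩
    · exact ⟨d₀, by rw [h]; exact Set.empty_subset _⟩
    · exact ⟨w, fun u hu => mem_eq_of_ncard_le_one (hpiece z) hu hw⟩
  obtain ⟨z1, hz1⟩ := hselect x
  obtain ⟨z2, hz2⟩ := hselect y
  have hpair : ∀ d, G.vtx d ∈ W → G.vtx (G.α d) ∉ W → d = z1 ∨ d = z2 := by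
    intro d h1 h2
    rcases hcover d h1 h2 with h | h
    · exact Or.inl (hz1 h)
    · exact Or.inr (hz2 h)
  rcases hpair d₀ hd₀W hd₀W' with h | h
  · subst h
    exact crossing_pair_contradiction hd W hd₀W hd₀W' hpair
  · subst h
    exact crossing_pair_contradiction hd W hd₀W hd₀W' (fun d h1 h2 => (hpair d h1 h2).symm)

end EmbGraph
lemma sum_eq_extract {γ : Type*} [Fintype γ] (fn : γ → ℕ) (m : ℕ) (hle : ∀ i, m ≤ fn i)
    (hsum : ∑ i : γ, fn i = m * Fintype.card γ) : ∀ i, fn i = m := by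
  intro i
  by_contra hne
  have hlt : m < fn i := lt_of_le_of_ne (hle i) (Ne.symm hne)
  have h := Finset.sum_lt_sum (f := fun _ : γ => m) (g := fn)
      (fun j _ => hle j) ⟨i, Finset.mem_univ i, hlt⟩
  rw [Finset.sum_const, smul_eq_mul, Finset.card_univ, mul_comm] at h
  rw [hsum] at h
  exact lt_irrefl _ h

namespace EmbGraph

open Equiv Equiv.Perm

variable {G : EmbGraph}

lemma five_vertices_complete (hs : G.IsSimple) (hv5 : Nat.card G.Vert = 5)
    (hE10 : Nat.card G.Edge = 10) :
    ∀ u w : G.Vert, u ≠ w → G.underlying.Adj u w := by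
  classical
  letI : Fintype G.Vert := Fintype.ofFinite _
  letI : Fintype G.Edge := Fintype.ofFinite _
  have hwd : ∀ d d' : G.D, (G.sameCycleSetoid G.α).r d d' →
      s(G.vtx d, G.vtx (G.α d)) = s(G.vtx d', G.vtx (G.α d')) := by
    intro d d' hr
    have : G.edgeOf d = G.edgeOf d' := Quot.sound hr
    rcases edge_eq_cases this.symm with h | h
    · rw [h]
    · subst h
      rw [alpha_alpha]
      exact Sym2.eq_swap
  set em : G.Edge → Sym2 G.Vert := Quotient.lift _ hwd with hemdef
  have hem : ∀ d : G.D, em (G.edgeOf d) = s(G.vtx d, G.vtx (G.α d)) := fun d => rfl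
  have hdiag : ∀ e : G.Edge, ¬ (em e).IsDiag := by
    intro e
    induction e using Quotient.inductionOn with
    | _ d =>
      exact fun hdg => hs.1 d (Sym2.mk_isDiag_iff.1 hdg)
  set EM : G.Edge → {p : Sym2 G.Vert // ¬ p.IsDiag} := fun e => ⟨em e, hdiag e⟩ with hEMdef
  have hinj : Function.Injective EM := by
    intro e e' hh
    induction e using Quotient.inductionOn with
    | _ d =>
    induction e' using Quotient.inductionOn with
    | _ d' =>
      have h2 : s(G.vtx d, G.vtx (G.α d)) = s(G.vtx d', G.vtx (G.α d')) :=
        congrArg Subtype.val hh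
      rw [Sym2.eq_iff] at h2
      rcases h2 with ⟨h1, h2⟩ | ⟨h1, h2⟩
      · have : d = d' := dart_eq hs h1 h2
        rw [this]
      · have : d = G.α d' := dart_eq hs h1 (by rw [alpha_alpha]; exact h2)
        show G.edgeOf d = G.edgeOf d'
        rw [this, edgeOf_alpha]
  have hcards : Fintype.card G.Edge = Fintype.card {p : Sym2 G.Vert // ¬ p.IsDiag} := by
    rw [Sym2.card_subtype_not_diag]
    rw [← Nat.card_eq_fintype_card, hE10, ← Nat.card_eq_fintype_card, hv5]
    decide
  have hbij : Function.Bijective EM :=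
    (Fintype.bijective_iff_injective_and_card EM).2 ⟨hinj, hcards⟩
  intro u w huw
  obtain ⟨e, he⟩ := hbij.2 ⟨s(u, w), by rw [Sym2.mk_isDiag_iff]; exact huw⟩
  induction e using Quotient.inductionOn with
  | _ d =>
    have he2 : s(G.vtx d, G.vtx (G.α d)) = s(u, w) := congrArg Subtype.val he
    rw [Sym2.eq_iff] at he2
    rcases he2 with ⟨h1, h2⟩ | ⟨h1, h2⟩
    · exact ⟨huw, d, h1, h2⟩
    · exact ⟨huw, G.α d, h2, by rw [alpha_alpha]; exact h1⟩

end EmbGraph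
lemma exists_pair_of_two_le_ncard {X : Type*} [Finite X] {s : Set X} (h : 2 ≤ s.ncard) :
    ∃ u v, u ∈ s ∧ v ∈ s ∧ u ≠ v := by
  have h1 : 1 < s.ncard := h
  obtain ⟨u, hu, v, hv, huv⟩ := (Set.one_lt_ncard (Set.toFinite _)).1 h1
  exact ⟨u, v, hu, hv, huv⟩

namespace EmbGraph

open Equiv Equiv.Perm

variable {G : EmbGraph}

lemma phi_ne_self {d : G.D} (h5 : 3 ≤ ({d' | G.faceOf d' = G.faceOf d} : Set G.D).ncard) :
    G.facePerm d ≠ d := by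
  intro h
  rw [face_eq_singleton_of_fixed h, Set.ncard_singleton] at h5
  omega

lemma pair_dart_eqs (hs : G.IsSimple) {x y : G.Vert} {d : G.D}
    (h1 : G.vtx d ∈ ({x, y} : Set G.Vert)) (h2 : G.vtx (G.α d) ∈ ({x, y} : Set G.Vert)) :
    (G.vtx d = x ∧ G.vtx (G.α d) = y) ∨ (G.vtx d = y ∧ G.vtx (G.α d) = x) := by
  have hne := hs.1 d
  simp only [Set.mem_insert_iff, Set.mem_singleton_iff] at h1 h2
  rcases h1 with h1 | h1 <;> rcases h2 with h2 | h2
  · exact absurd (h1.trans h2.symm) hne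
  · exact Or.inl ⟨h1, h2⟩
  · exact Or.inr ⟨h1, h2⟩
  · exact absurd (h1.trans h2.symm) hne

lemma same_edge_of_S0_darts (hs : G.IsSimple) {x y : G.Vert} {d d' : G.D}
    (ht : G.vtx d ∈ ({x, y} : Set G.Vert)) (hh : G.vtx (G.α d) ∈ ({x, y} : Set G.Vert))
    (ht' : G.vtx d' ∈ ({x, y} : Set G.Vert)) (hh' : G.vtx (G.α d') ∈ ({x, y} : Set G.Vert)) :
    G.edgeOf d = G.edgeOf d' := by
  rcases pair_dart_eqs hs ht hh with ⟨e1, e2⟩ | ⟨e1, e2⟩ <;>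
    rcases pair_dart_eqs hs ht' hh' with ⟨e3, e4⟩ | ⟨e3, e4⟩
  · rw [dart_eq hs (e1.trans e3.symm) (e2.trans e4.symm)]
  · have : d = G.α d' := dart_eq hs (e1.trans e4.symm) (by rw [alpha_alpha]; exact e2.trans e3.symm)
    rw [this, edgeOf_alpha]
  · have : d = G.α d' := dart_eq hs (e1.trans e4.symm) (by rw [alpha_alpha]; exact e2.trans e3.symm)
    rw [this, edgeOf_alpha]
  · rw [dart_eq hs (e1.trans e3.symm) (e2.trans e4.symm)]

/-- Every face with at least 3 darts has a dart whose tail is not in the 2-cut. -/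
lemma exists_noncut_tail (hs : G.IsSimple) {x y : G.Vert} {g : G.Face}
    (h3 : 3 ≤ ({d | G.faceOf d = g} : Set G.D).ncard) :
    ∃ d, G.faceOf d = g ∧ G.vtx d ∉ ({x, y} : Set G.Vert) := by
  by_contra hall
  push_neg at hall
  obtain ⟨d₀, hd₀⟩ := exists_face_dart g
  have hheads : ∀ d, G.faceOf d = g → G.vtx (G.α d) ∈ ({x, y} : Set G.Vert) := by
    intro d hdg
    have h := hall (G.facePerm d) (by rw [faceOf_facePerm, hdg])
    rwa [vtx_facePerm] at h
  have hsub : {d | G.faceOf d = g} ⊆ {d₀, G.α d₀} := by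
    intro d hdg
    have he : G.edgeOf d = G.edgeOf d₀ :=
      same_edge_of_S0_darts hs (hall d hdg) (hheads d hdg) (hall d₀ hd₀) (hheads d₀ hd₀)
    rw [← edge_fiber_eq]
    exact he
  have h2 : ({d | G.faceOf d = g} : Set G.D).ncard ≤ 2 := by
    calc ({d | G.faceOf d = g} : Set G.D).ncard ≤ ({d₀, G.α d₀} : Set G.D).ncard :=
          Set.ncard_le_ncard hsub (Set.toFinite _)
      _ ≤ 2 := Set.ncard_insert_le _ _ |>.trans (by rw [Set.ncard_singleton])
  omega

/-- A vertex outside the 2-cut whose reachability class is a singleton has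
degree at most 2. -/
lemma two_le_class (hs : G.IsSimple) {S0 : Set G.Vert} (hS2 : S0.ncard = 2)
    {v : G.Vert} (hv : v ∉ S0) (hdeg : 3 ≤ G.degree v) :
    2 ≤ (G.cls S0 v).ncard := by
  by_contra hlt
  push_neg at hlt
  have h1 : (G.cls S0 v).ncard ≤ 1 := by omega
  have hvv : v ∈ G.cls S0 v := mem_cls_self hv
  have hheads : ∀ d : {d // G.vtx d = v}, G.vtx (G.α d.1) ∈ S0 := by
    rintro ⟨d, hd⟩
    by_contra hns
    have hmem : G.vtx (G.α d) ∈ G.cls S0 v := head_mem_cls hs (by rw [hd]; exact hvv) hns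
    have : G.vtx (G.α d) = v := mem_eq_of_ncard_le_one h1 hmem hvv
    exact hs.1 d (by rw [hd, this])
  have hinj : Function.Injective (fun d : {d // G.vtx d = v} =>
      (⟨G.vtx (G.α d.1), hheads d⟩ : ↥S0)) := by
    rintro ⟨d, hd⟩ ⟨d', hd'⟩ hh
    exact Subtype.ext (dart_eq hs (hd.trans hd'.symm) (congrArg Subtype.val hh))
  have hle : G.degree v ≤ Nat.card ↥S0 := Nat.card_le_card_of_injective _ hinj
  rw [Nat.card_coe_set_eq, hS2] at hle
  omega

/-- Lower bound on the number of darts with tail in a set of vertices. -/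
lemma card_tails_ge [Fintype G.Vert] (hdeg3 : ∀ v, 3 ≤ G.degree v) (B : Set G.Vert) :
    3 * B.ncard ≤ Nat.card {d // G.vtx d ∈ B} := by
  classical
  rw [nat_card_fibers' G.vtx (fun d => G.vtx d ∈ B)]
  have hBcard : B.ncard = B.toFinset.card := Set.ncard_eq_toFinset_card' B
  calc 3 * B.ncard = ∑ _v ∈ B.toFinset, 3 := by
        rw [Finset.sum_const, smul_eq_mul, ← hBcard, mul_comm]
    _ ≤ ∑ v ∈ B.toFinset, Nat.card {d // G.vtx d ∈ B ∧ G.vtx d = v} := by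
        refine Finset.sum_le_sum fun v hv => ?_
        have hvB : v ∈ B := Set.mem_toFinset.1 hv
        have : Nat.card {d // G.vtx d ∈ B ∧ G.vtx d = v} = G.degree v := by
          refine Nat.card_congr (Equiv.subtypeEquivRight fun d => ?_)
          constructor
          · exact fun h => h.2
          · exact fun h => ⟨h ▸ hvB, h⟩
        rw [this]
        exact hdeg3 v
    _ ≤ ∑ v : G.Vert, Nat.card {d // G.vtx d ∈ B ∧ G.vtx d = v} :=
        Finset.sum_le_sum_of_subset (Finset.subset_univ _)

/-- Decomposing the darts with tail in `B` over faces. -/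
lemma card_tails_eq_sum [Fintype G.Face] (B : Set G.Vert) :
    Nat.card {d // G.vtx d ∈ B} =
      ∑ g : G.Face, ({d | G.faceOf d = g ∧ G.vtx d ∈ B} : Set G.D).ncard := by
  classical
  rw [nat_card_fibers' G.faceOf (fun d => G.vtx d ∈ B)]
  refine Finset.sum_congr rfl fun g _ => ?_
  rw [ncard_eq_nat_card]
  exact Nat.card_congr (Equiv.subtypeEquivRight fun d => and_comm)

end EmbGraph
namespace EmbGraph

open Equiv Equiv.Perm

variable {G : EmbGraph}

lemma six_faces_contradiction (_hconn : G.Connected) (hs : G.IsSimple) (hd : G.DualSimple)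
    (hcomp : ∀ f g : G.Face, f ≠ g → G.dualGraph.Adj f g)
    (hF : Nat.card G.Face = 6) (hv : Nat.card G.Vert = 9) (hD : Nat.card G.D = 30)
    (hfs : ∀ f, G.faceSize f = 5) (hdeg3 : ∀ v, 3 ≤ G.degree v)
    (hcut : ∃ S : Set G.Vert, S.ncard = 2 ∧ IsCutSet G.underlying S) : False := by
  classical
  letI : Fintype G.Vert := Fintype.ofFinite _
  letI : Fintype G.Face := Fintype.ofFinite _
  obtain ⟨S0, hS2, a, b, hnr⟩ := hcut
  obtain ⟨x, y, hxy, rfl⟩ := Set.ncard_eq_two.1 hS2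
  have hS0n : ({x, y} : Set G.Vert).ncard = 2 := Set.ncard_pair hxy
  have hfib5 : ∀ g : G.Face, ({d | G.faceOf d = g} : Set G.D).ncard = 5 := fun g => by
    rw [← faceSize_eq_ncard]; exact hfs g
  have hphi : ∀ d : G.D, G.facePerm d ≠ d := fun d =>
    phi_ne_self (by rw [hfib5 (G.faceOf d)]; omega)
  have hbal : ∀ (g : G.Face) (U : Set G.Vert),
      ({d | G.faceOf d = g ∧ G.vtx (G.α d) ∈ U} : Set G.D).ncard =
      ({d | G.faceOf d = g ∧ G.vtx d ∈ U} : Set G.D).ncard := by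
    intro g U
    rw [ncard_eq_nat_card, ncard_eq_nat_card]
    exact card_heads_eq_card_tails U g
  have hU6 : ∀ (g : G.Face) (v : G.Vert),
      (({d | G.faceOf d = g ∧ G.vtx d ∈ G.cls {x, y} v} : Set G.D)).Nonempty →
      (({d | G.faceOf d = g ∧ G.vtx d ∉ G.cls {x, y} v} : Set G.D)).Nonempty →
      ∃ d, G.faceOf d = g ∧ G.vtx d ∈ ({x, y} : Set G.Vert) ∧
        G.vtx (G.α d) ∈ G.cls {x, y} v := by
    rintro g v ⟨d1, hd1f, hd1U⟩ ⟨d2, hd2f, hd2U⟩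
    obtain ⟨e, hef, het, heh⟩ :=
      exists_crossing_in_face' (G.cls {x, y} v) hd1f hd1U hd2f hd2U
    refine ⟨e, hef, ?_, heh⟩
    by_contra hns
    exact het (tail_mem_cls hs heh hns)
  have hclsab : G.cls {x, y} ↑a ≠ G.cls {x, y} ↑b := by
    intro h
    have hmem : (a : G.Vert) ∈ G.cls {x, y} ↑b := h ▸ mem_cls_self a.2
    obtain ⟨ha', hb', hr⟩ := hmem
    exact hnr hr
  have hfc : (Finset.univ : Finset G.Face).card = 6 := by
    rw [Finset.card_univ, ← Nat.card_eq_fintype_card, hF]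
  by_cases hInt : ∃ g₀ v₀, v₀ ∉ ({x, y} : Set G.Vert) ∧
      ∀ d, G.faceOf d = g₀ → G.vtx d ∈ G.cls {x, y} v₀
  · -- CASE I : an interior face exists
    obtain ⟨g₀, v₀, hv₀, hint⟩ := hInt
    obtain ⟨vB, hvBS, hBK⟩ : ∃ v, v ∉ ({x, y} : Set G.Vert) ∧
        G.cls {x, y} v ≠ G.cls {x, y} v₀ := by
      by_cases h : G.cls {x, y} ↑a = G.cls {x, y} v₀
      · exact ⟨↑b, b.2, fun hh => hclsab (h.trans hh.symm)⟩
      · exact ⟨↑a, a.2, h⟩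
    have hBdisjK : ∀ u, u ∈ G.cls {x, y} vB → u ∉ G.cls {x, y} v₀ :=
      fun u h1 h2 => hBK (cls_eq_cls h1 h2)
    have hB2 : 2 ≤ (G.cls {x, y} vB).ncard := two_le_class hs hS0n hvBS (hdeg3 vB)
    have hlow := card_tails_ge hdeg3 (G.cls {x, y} vB)
    have hface_bound : ∀ g, g ≠ g₀ →
        ({d | G.faceOf d = g ∧ G.vtx d ∈ G.cls {x, y} vB} : Set G.D).ncard ≤ 1 := by
      intro g hgg
      rcases Set.eq_empty_or_nonempty
          ({d | G.faceOf d = g ∧ G.vtx d ∈ G.cls {x, y} vB} : Set G.D) with hemp | hne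
      · rw [hemp]; simp
      · obtain ⟨m, hmf, hmB⟩ := hne
        obtain ⟨hne', dsh, hdsh1, hdsh2⟩ := hcomp g g₀ hgg
        have hk1 : G.vtx dsh ∈ G.cls {x, y} v₀ := by
          have h := hint (G.facePerm (G.α dsh)) (by rw [faceOf_facePerm, hdsh2])
          rwa [vtx_facePerm, alpha_alpha] at h
        have hk2f : G.faceOf (G.facePerm dsh) = g := by rw [faceOf_facePerm, hdsh1]
        have hk2 : G.vtx (G.facePerm dsh) ∈ G.cls {x, y} v₀ := by
          rw [vtx_facePerm]; exact hint (G.α dsh) hdsh2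
        have hk12 : dsh ≠ G.facePerm dsh := (hphi dsh).symm
        obtain ⟨cK, hcKf, hcKt, hcKh⟩ := hU6 g v₀ ⟨dsh, hdsh1, hk1⟩
          ⟨m, hmf, fun hmK => hBdisjK _ hmB hmK⟩
        obtain ⟨cB, hcBf, hcBt, hcBh⟩ := hU6 g vB ⟨m, hmf, hmB⟩
          ⟨dsh, hdsh1, fun hdB => hBdisjK _ hdB hk1⟩
        have hcKB : cK ≠ cB := fun h => hBdisjK _ hcBh (h ▸ hcKh)
        have hd_cK : dsh ≠ cK := fun h => cls_not_mem hk1 (h ▸ hcKt)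
        have hd_cB : dsh ≠ cB := fun h => cls_not_mem hk1 (h ▸ hcBt)
        have hp_cK : G.facePerm dsh ≠ cK := fun h => cls_not_mem hk2 (h ▸ hcKt)
        have hp_cB : G.facePerm dsh ≠ cB := fun h => cls_not_mem hk2 (h ▸ hcBt)
        have hq4 : ({dsh, G.facePerm dsh, cK, cB} : Set G.D) ⊆ {d | G.faceOf d = g} := by
          rintro d (rfl | rfl | rfl | rfl)
          · exact hdsh1
          · exact hk2f
          · exact hcKf
          · exact hcBf
        have hq4card : ({dsh, G.facePerm dsh, cK, cB} : Set G.D).ncard = 4 := by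
          rw [Set.ncard_insert_of_notMem (by simp [hk12, hd_cK, hd_cB]) (Set.toFinite _),
            Set.ncard_insert_of_notMem (by simp [hp_cK, hp_cB]) (Set.toFinite _),
            Set.ncard_pair hcKB]
        have hsubd : ({d | G.faceOf d = g ∧ G.vtx d ∈ G.cls {x, y} vB} : Set G.D) ⊆
            {d | G.faceOf d = g} \ {dsh, G.facePerm dsh, cK, cB} := by
          rintro d ⟨hdf, hdB⟩
          refine ⟨hdf, ?_⟩
          rintro (rfl | rfl | rfl | rfl)
          · exact hBdisjK _ hdB hk1
          · exact hBdisjK _ hdB hk2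
          · exact cls_not_mem hdB hcKt
          · exact cls_not_mem hdB hcBt
        calc ({d | G.faceOf d = g ∧ G.vtx d ∈ G.cls {x, y} vB} : Set G.D).ncard
            ≤ (({d | G.faceOf d = g} : Set G.D) \ {dsh, G.facePerm dsh, cK, cB}).ncard :=
              Set.ncard_le_ncard hsubd (Set.toFinite _)
          _ ≤ 1 := by
              rw [Set.ncard_diff hq4 (Set.toFinite _), hq4card, hfib5]
    have hzero : ({d | G.faceOf d = g₀ ∧ G.vtx d ∈ G.cls {x, y} vB} : Set G.D).ncard = 0 := by
      rw [Set.ncard_eq_zero (Set.toFinite _)]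
      rw [Set.eq_empty_iff_forall_notMem]
      rintro d ⟨hdf, hdB⟩
      exact hBdisjK _ hdB (hint d hdf)
    have hupp : Nat.card {d // G.vtx d ∈ G.cls {x, y} vB} ≤ 5 := by
      rw [card_tails_eq_sum]
      have hsplit : ∑ g ∈ Finset.univ.erase g₀,
            ({d | G.faceOf d = g ∧ G.vtx d ∈ G.cls {x, y} vB} : Set G.D).ncard +
            ({d | G.faceOf d = g₀ ∧ G.vtx d ∈ G.cls {x, y} vB} : Set G.D).ncard =
          ∑ g : G.Face, ({d | G.faceOf d = g ∧ G.vtx d ∈ G.cls {x, y} vB} : Set G.D).ncard :=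
        Finset.sum_erase_add Finset.univ _ (Finset.mem_univ g₀)
      have herase : ∑ g ∈ Finset.univ.erase g₀,
          ({d | G.faceOf d = g ∧ G.vtx d ∈ G.cls {x, y} vB} : Set G.D).ncard ≤ 5 := by
        calc ∑ g ∈ Finset.univ.erase g₀,
            ({d | G.faceOf d = g ∧ G.vtx d ∈ G.cls {x, y} vB} : Set G.D).ncard
            ≤ (Finset.univ.erase g₀).card • 1 :=
              Finset.sum_le_card_nsmul _ _ 1
                (fun g hg => hface_bound g (Finset.ne_of_mem_erase hg))
          _ ≤ 5 := by
              rw [Finset.card_erase_of_mem (Finset.mem_univ _), hfc, smul_eq_mul]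
      omega
    omega
  · -- CASE II : no interior face
    push_neg at hInt
    -- every face has a cut tail
    have hc1 : ∀ g : G.Face, ∃ d, G.faceOf d = g ∧ G.vtx d ∈ ({x, y} : Set G.Vert) := by
      intro g
      obtain ⟨d0, hd0f, hd0S⟩ := exists_noncut_tail hs (by rw [hfib5 g]; omega)
      obtain ⟨d1, hd1f, hd1n⟩ := hInt g (G.vtx d0) hd0S
      obtain ⟨e, he1, he2, he3⟩ := hU6 g (G.vtx d0) ⟨d0, hd0f, mem_cls_self hd0S⟩
        ⟨d1, hd1f, hd1n⟩
      exact ⟨e, he1, he2⟩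
    -- the number of cut-tail darts is at most 9
    have hS0c7 : (({x, y} : Set G.Vert)ᶜ).ncard = 7 := by
      have h := Set.ncard_add_ncard_compl ({x, y} : Set G.Vert)
      rw [hS0n, hv] at h
      omega
    have hcompl : Nat.card {d // G.vtx d ∈ ({x, y} : Set G.Vert)} +
        Nat.card {d // G.vtx d ∈ ({x, y} : Set G.Vert)ᶜ} = 30 := by
      have h := Set.ncard_add_ncard_compl ({d | G.vtx d ∈ ({x, y} : Set G.Vert)} : Set G.D)
      rw [hD] at h
      rw [ncard_eq_nat_card, ncard_eq_nat_card] at h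
      have e2 : Nat.card {d // G.vtx d ∈ ({x, y} : Set G.Vert)ᶜ} =
          Nat.card {z // z ∈ (({d | G.vtx d ∈ ({x, y} : Set G.Vert)} : Set G.D)ᶜ)} :=
        Nat.card_congr (Equiv.subtypeEquivRight fun d => Iff.rfl)
      rw [e2]
      exact h
    have hD2 : Nat.card {d // G.vtx d ∈ ({x, y} : Set G.Vert)} ≤ 9 := by
      have hlow := card_tails_ge hdeg3 (({x, y} : Set G.Vert)ᶜ)
      rw [hS0c7] at hlow
      omega
    -- private faces
    set PrivP : G.Face → Prop := fun g => ∃ v, v ∉ ({x, y} : Set G.Vert) ∧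
      ∀ d, G.faceOf d = g → G.vtx d ∈ G.cls {x, y} v ∪ {x, y} with hPrivdef
    letI : DecidablePred PrivP := fun g => Classical.dec _
    have hc2 : ∀ g, ¬ PrivP g →
        2 ≤ ({d | G.faceOf d = g ∧ G.vtx d ∈ ({x, y} : Set G.Vert)} : Set G.D).ncard := by
      intro g hnp
      simp only [hPrivdef] at hnp
      push_neg at hnp
      obtain ⟨d0, hd0f, hd0S⟩ := exists_noncut_tail hs (by rw [hfib5 g]; omega)
      obtain ⟨d1, hd1f, hd1n⟩ := hnp (G.vtx d0) hd0S
      rw [Set.mem_union, not_or] at hd1n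
      obtain ⟨hd1K, hd1S⟩ := hd1n
      have hd1self : G.vtx d1 ∈ G.cls {x, y} (G.vtx d1) := mem_cls_self hd1S
      have hdisj : ∀ u, u ∈ G.cls {x, y} (G.vtx d0) → u ∉ G.cls {x, y} (G.vtx d1) := by
        intro u h1 h2
        exact hd1K ((cls_eq_cls h1 h2) ▸ hd1self)
      obtain ⟨c1, hc1f, hc1t, hc1h⟩ := hU6 g (G.vtx d0) ⟨d0, hd0f, mem_cls_self hd0S⟩
        ⟨d1, hd1f, hd1K⟩
      obtain ⟨c2, hc2f, hc2t, hc2h⟩ := hU6 g (G.vtx d1) ⟨d1, hd1f, hd1self⟩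
        ⟨d0, hd0f, fun h => hdisj _ (mem_cls_self hd0S) h⟩
      have hcc : c1 ≠ c2 := fun h => hdisj _ hc1h (h ▸ hc2h)
      exact two_le_ncard_of_mem hcc ⟨hc1f, hc1t⟩ ⟨hc2f, hc2t⟩
    -- decompose cut darts over faces
    have hsum_c := card_tails_eq_sum (G := G) ({x, y} : Set G.Vert)
    set pf : Finset G.Face := Finset.univ.filter PrivP with hpfdef
    have hcards : pf.card + (Finset.univ.filter (fun g => ¬ PrivP g)).card = 6 := by
      rw [hpfdef, Finset.card_filter_add_card_filter_not, hfc]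
    have hpf3 : 3 ≤ pf.card := by
      by_contra hlt
      push_neg at hlt
      have hlb1 : ∀ g ∈ pf, 1 ≤ ({d | G.faceOf d = g ∧ G.vtx d ∈ ({x, y} : Set G.Vert)} :
          Set G.D).ncard := by
        intro g _
        obtain ⟨d, hd1, hd2⟩ := hc1 g
        exact (Set.ncard_pos (Set.toFinite _)).2 ⟨d, hd1, hd2⟩
      have hlb2 : ∀ g ∈ Finset.univ.filter (fun g => ¬ PrivP g),
          2 ≤ ({d | G.faceOf d = g ∧ G.vtx d ∈ ({x, y} : Set G.Vert)} : Set G.D).ncard :=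
        fun g hg => hc2 g (Finset.mem_filter.1 hg).2
      have e1 := Finset.card_nsmul_le_sum pf
        (fun g => ({d | G.faceOf d = g ∧ G.vtx d ∈ ({x, y} : Set G.Vert)} : Set G.D).ncard) 1 hlb1
      have e2 := Finset.card_nsmul_le_sum (Finset.univ.filter (fun g => ¬ PrivP g))
        (fun g => ({d | G.faceOf d = g ∧ G.vtx d ∈ ({x, y} : Set G.Vert)} : Set G.D).ncard) 2 hlb2
      have esplit : (∑ g ∈ pf,
            ({d | G.faceOf d = g ∧ G.vtx d ∈ ({x, y} : Set G.Vert)} : Set G.D).ncard) +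
          ∑ g ∈ Finset.univ.filter (fun g => ¬ PrivP g),
            ({d | G.faceOf d = g ∧ G.vtx d ∈ ({x, y} : Set G.Vert)} : Set G.D).ncard =
          ∑ g : G.Face,
            ({d | G.faceOf d = g ∧ G.vtx d ∈ ({x, y} : Set G.Vert)} : Set G.D).ncard :=
        Finset.sum_filter_add_sum_filter_not _ _ _
      rw [smul_eq_mul] at e1 e2
      omega
    -- choose witnesses for private faces
    have hPv : ∀ g, PrivP g → ∃ v, v ∉ ({x, y} : Set G.Vert) ∧
        ∀ d, G.faceOf d = g → G.vtx d ∈ G.cls {x, y} v ∪ {x, y} := by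
      intro g hg
      rw [hPrivdef] at hg
      exact hg
    haveI : Inhabited G.Vert := ⟨x⟩
    choose! vP hvP1 hvP2 using hPv
    -- crossing darts between two privates of different classes
    have hcross : ∀ p q, PrivP p → PrivP q → p ≠ q →
        G.cls {x, y} (vP p) ≠ G.cls {x, y} (vP q) →
        ∃ d, G.faceOf d = p ∧ G.faceOf (G.α d) = q ∧
          G.vtx d ∈ ({x, y} : Set G.Vert) ∧ G.vtx (G.α d) ∈ ({x, y} : Set G.Vert) := by
      intro p q hp hq hpq hcls
      obtain ⟨-, d, hd1, hd2⟩ := hcomp p q hpq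
      have ht1 := hvP2 p hp d hd1
      have ht2 : G.vtx d ∈ G.cls {x, y} (vP q) ∪ {x, y} := by
        have h := hvP2 q hq (G.facePerm (G.α d)) (by rw [faceOf_facePerm, hd2])
        rwa [vtx_facePerm, alpha_alpha] at h
      have hh1 := hvP2 q hq (G.α d) hd2
      have hh2 : G.vtx (G.α d) ∈ G.cls {x, y} (vP p) ∪ {x, y} := by
        have h := hvP2 p hp (G.facePerm d) (by rw [faceOf_facePerm, hd1])
        rwa [vtx_facePerm] at h
      have htS : G.vtx d ∈ ({x, y} : Set G.Vert) := by
        rcases ht1 with h1 | h1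
        · rcases ht2 with h2 | h2
          · exact absurd (cls_eq_cls h1 h2) hcls
          · exact h2
        · exact h1
      have hhS : G.vtx (G.α d) ∈ ({x, y} : Set G.Vert) := by
        rcases hh2 with h1 | h1
        · rcases hh1 with h2 | h2
          · exact absurd (cls_eq_cls h1 h2) hcls
          · exact h2
        · exact h1
      exact ⟨d, hd1, hd2, htS, hhS⟩
    have htriple : ∀ p q r, PrivP p → PrivP q → PrivP r → p ≠ q → p ≠ r → q ≠ r →
        G.cls {x, y} (vP p) ≠ G.cls {x, y} (vP q) →
        G.cls {x, y} (vP p) ≠ G.cls {x, y} (vP r) → False := by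
      intro p q r hp hq hr hpq hpr hqr hc1' hc2'
      obtain ⟨d, hd1, hd2, hd3, hd4⟩ := hcross p q hp hq hpq hc1'
      obtain ⟨d', hd1', hd2', hd3', hd4'⟩ := hcross p r hp hr hpr hc2'
      have he : G.edgeOf d' = G.edgeOf d := same_edge_of_S0_darts hs hd3' hd4' hd3 hd4
      rcases edge_eq_cases he with h | h
      · rw [h] at hd2'
        exact hqr (hd2.symm.trans hd2')
      · rw [h] at hd1'
        exact hpq (hd1'.symm.trans hd2)
    -- three distinct private faces
    obtain ⟨t3, ht3sub, ht3card⟩ := Finset.exists_subset_card_eq hpf3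
    obtain ⟨g1', g2', g3', h12, h13, h23, ht3⟩ := Finset.card_eq_three.1 ht3card
    have hg1p : PrivP g1' := (Finset.mem_filter.1 (ht3sub (by rw [ht3]; simp))).2
    have hg2p : PrivP g2' := (Finset.mem_filter.1 (ht3sub (by rw [ht3]; simp))).2
    have hg3p : PrivP g3' := (Finset.mem_filter.1 (ht3sub (by rw [ht3]; simp))).2
    set K : Set G.Vert := G.cls {x, y} (vP g1') with hKdef
    have hK2 : G.cls {x, y} (vP g2') = K := by
      by_contra hne
      by_cases h3 : G.cls {x, y} (vP g3') = K
      · exact htriple g2' g1' g3' hg2p hg1p hg3p (Ne.symm h12) h23 h13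
          (fun h => hne h) (fun h => hne (h.trans h3))
      · exact htriple g1' g2' g3' hg1p hg2p hg3p h12 h13 h23
          (fun h => hne h.symm) (fun h => h3 h.symm)
    have hK3 : G.cls {x, y} (vP g3') = K := by
      by_contra hne
      exact htriple g3' g1' g2' hg3p hg1p hg2p (Ne.symm h13) (Ne.symm h23) h12
        (fun h => hne h) (fun h => hne (h.trans hK2))
    have hallK : ∀ g, PrivP g → G.cls {x, y} (vP g) = K := by
      intro g hg
      by_contra hne
      have hgg1 : g ≠ g1' := fun h => hne (by rw [h])
      have hgg2 : g ≠ g2' := fun h => hne (by rw [h]; exact hK2)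
      exact htriple g g1' g2' hg hg1p hg2p hgg1 hgg2 h12 (fun h => hne h)
        (fun h => hne (h.trans hK2))
    -- pick the class B different from K
    obtain ⟨vB, hvBS, hBK⟩ : ∃ v, v ∉ ({x, y} : Set G.Vert) ∧ G.cls {x, y} v ≠ K := by
      by_cases h : G.cls {x, y} ↑a = K
      · exact ⟨↑b, b.2, fun hh => hclsab (h.trans hh.symm)⟩
      · exact ⟨↑a, a.2, h⟩
    have hBdisjK : ∀ u, u ∈ G.cls {x, y} vB → u ∉ K := by
      intro u h1 h2
      rw [hKdef] at h2
      exact hBK (by rw [hKdef]; exact cls_eq_cls h1 h2)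
    -- private faces do not meet B
    have hpf_nomeet : ∀ g, PrivP g →
        ({d | G.faceOf d = g ∧ G.vtx d ∈ G.cls {x, y} vB} : Set G.D) = ∅ := by
      intro g hg
      rw [Set.eq_empty_iff_forall_notMem]
      rintro d ⟨hdf, hdB⟩
      rcases hvP2 g hg d hdf with h | h
      · rw [hallK g hg] at h
        exact hBdisjK _ hdB h
      · exact cls_not_mem hdB h
    -- non-private faces have at most 2 tails in B
    have hbound2 : ∀ g, ¬ PrivP g →
        ({d | G.faceOf d = g ∧ G.vtx d ∈ G.cls {x, y} vB} : Set G.D).ncard ≤ 2 := by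
      intro g hnp
      rcases Set.eq_empty_or_nonempty
          ({d | G.faceOf d = g ∧ G.vtx d ∈ G.cls {x, y} vB} : Set G.D) with hemp | hne
      · rw [hemp]; simp
      · obtain ⟨m, hmf, hmB⟩ := hne
        simp only [hPrivdef] at hnp
        push_neg at hnp
        obtain ⟨d1, hd1f, hd1n⟩ := hnp vB hvBS
        rw [Set.mem_union, not_or] at hd1n
        obtain ⟨hd1B, hd1S⟩ := hd1n
        have hd1self : G.vtx d1 ∈ G.cls {x, y} (G.vtx d1) := mem_cls_self hd1S
        have hdisj : ∀ u, u ∈ G.cls {x, y} vB → u ∉ G.cls {x, y} (G.vtx d1) := by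
          intro u h1 h2
          exact hd1B ((cls_eq_cls h1 h2) ▸ hd1self)
        obtain ⟨cB, hcBf, hcBt, hcBh⟩ := hU6 g vB ⟨m, hmf, hmB⟩ ⟨d1, hd1f, hd1B⟩
        obtain ⟨cC, hcCf, hcCt, hcCh⟩ := hU6 g (G.vtx d1) ⟨d1, hd1f, hd1self⟩
          ⟨m, hmf, hdisj _ hmB⟩
        have hne1 : cB ≠ cC := fun h => hdisj _ hcBh (h ▸ hcCh)
        have hq1 : d1 ≠ cB := fun h => hd1S (h ▸ hcBt)
        have hq2 : d1 ≠ cC := fun h => hd1S (h ▸ hcCt)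
        have hsub3 : ({d1, cB, cC} : Set G.D) ⊆ {d | G.faceOf d = g} := by
          rintro d (rfl | rfl | rfl)
          · exact hd1f
          · exact hcBf
          · exact hcCf
        have hc3 : ({d1, cB, cC} : Set G.D).ncard = 3 :=
          Set.ncard_eq_three.2 ⟨_, _, _, hq1, hq2, hne1, rfl⟩
        have hsubd : ({d | G.faceOf d = g ∧ G.vtx d ∈ G.cls {x, y} vB} : Set G.D) ⊆
            {d | G.faceOf d = g} \ {d1, cB, cC} := by
          rintro d ⟨hdf, hdB⟩
          refine ⟨hdf, ?_⟩
          rintro (rfl | rfl | rfl)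
          · exact hd1B hdB
          · exact cls_not_mem hdB hcBt
          · exact cls_not_mem hdB hcCt
        calc ({d | G.faceOf d = g ∧ G.vtx d ∈ G.cls {x, y} vB} : Set G.D).ncard
            ≤ (({d | G.faceOf d = g} : Set G.D) \ {d1, cB, cC}).ncard :=
              Set.ncard_le_ncard hsubd (Set.toFinite _)
          _ ≤ 2 := by
              rw [Set.ncard_diff hsub3 (Set.toFinite _), hc3, hfib5]
    -- counting squeeze
    have hB2 : 2 ≤ (G.cls {x, y} vB).ncard := two_le_class hs hS0n hvBS (hdeg3 vB)
    have hNlow := card_tails_ge hdeg3 (G.cls {x, y} vB)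
    have hsumB := card_tails_eq_sum (G := G) (G.cls {x, y} vB)
    have hsplitB : (∑ g ∈ pf,
          ({d | G.faceOf d = g ∧ G.vtx d ∈ G.cls {x, y} vB} : Set G.D).ncard) +
        ∑ g ∈ Finset.univ.filter (fun g => ¬ PrivP g),
          ({d | G.faceOf d = g ∧ G.vtx d ∈ G.cls {x, y} vB} : Set G.D).ncard =
        ∑ g : G.Face, ({d | G.faceOf d = g ∧ G.vtx d ∈ G.cls {x, y} vB} : Set G.D).ncard :=
      Finset.sum_filter_add_sum_filter_not _ _ _
    have hzeroB : ∑ g ∈ pf,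
        ({d | G.faceOf d = g ∧ G.vtx d ∈ G.cls {x, y} vB} : Set G.D).ncard = 0 :=
      Finset.sum_eq_zero fun g hg => by
        rw [hpf_nomeet g (Finset.mem_filter.1 hg).2, Set.ncard_empty]
    have hubB : ∑ g ∈ Finset.univ.filter (fun g => ¬ PrivP g),
        ({d | G.faceOf d = g ∧ G.vtx d ∈ G.cls {x, y} vB} : Set G.D).ncard ≤
        (Finset.univ.filter (fun g => ¬ PrivP g)).card • 2 :=
      Finset.sum_le_card_nsmul _ _ 2 (fun g hg => hbound2 g (Finset.mem_filter.1 hg).2)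
    rw [smul_eq_mul] at hubB
    have hpfcard : pf.card = 3 := by omega
    have hBcard2 : (G.cls {x, y} vB).ncard = 2 := by omega
    have hsumnot : ∑ g ∈ Finset.univ.filter (fun g => ¬ PrivP g),
        ({d | G.faceOf d = g ∧ G.vtx d ∈ G.cls {x, y} vB} : Set G.D).ncard = 6 := by omega
    have hteq : ∀ g, ¬ PrivP g →
        ({d | G.faceOf d = g ∧ G.vtx d ∈ G.cls {x, y} vB} : Set G.D).ncard = 2 := by
      intro g hg
      by_contra hne2
      have hglt : ({d | G.faceOf d = g ∧ G.vtx d ∈ G.cls {x, y} vB} : Set G.D).ncard < 2 :=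
        lt_of_le_of_ne (hbound2 g hg) hne2
      have hmem : g ∈ Finset.univ.filter (fun g => ¬ PrivP g) :=
        Finset.mem_filter.2 ⟨Finset.mem_univ g, hg⟩
      have hstrict : ∑ g' ∈ Finset.univ.filter (fun g => ¬ PrivP g),
          ({d | G.faceOf d = g' ∧ G.vtx d ∈ G.cls {x, y} vB} : Set G.D).ncard <
          ∑ _g' ∈ Finset.univ.filter (fun g => ¬ PrivP g), 2 :=
        Finset.sum_lt_sum (fun i hi => hbound2 i (Finset.mem_filter.1 hi).2) ⟨g, hmem, hglt⟩
      rw [Finset.sum_const, smul_eq_mul] at hstrict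
      omega
    obtain ⟨u, w, huw, hBuw⟩ := Set.ncard_eq_two.1 hBcard2
    have huB : u ∈ G.cls {x, y} vB := by rw [hBuw]; exact Set.mem_insert _ _
    have hwB : w ∈ G.cls {x, y} vB := by rw [hBuw]; exact Set.mem_insert_of_mem _ rfl
    have hduw : ∃ duw, G.vtx duw = u ∧ G.vtx (G.α duw) = w := by
      by_contra hno
      push_neg at hno
      have hheads : ∀ d : {d // G.vtx d = u}, G.vtx (G.α d.1) ∈ ({x, y} : Set G.Vert) := by
        rintro ⟨d, hdu⟩
        by_contra hns
        have hh : G.vtx (G.α d) ∈ G.cls {x, y} vB :=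
          head_mem_cls hs (by rw [hdu]; exact huB) hns
        rw [hBuw] at hh
        simp only [Set.mem_insert_iff, Set.mem_singleton_iff] at hh
        rcases hh with hh | hh
        · exact hs.1 d (by rw [hdu, hh])
        · exact hno d hdu hh
      have hinj : Function.Injective (fun d : {d // G.vtx d = u} =>
          (⟨G.vtx (G.α d.1), hheads d⟩ : ↥({x, y} : Set G.Vert))) := by
        rintro ⟨d, hd1⟩ ⟨d', hd2⟩ hh
        exact Subtype.ext (dart_eq hs (hd1.trans hd2.symm) (congrArg Subtype.val hh))
      have hle : G.degree u ≤ Nat.card ↥({x, y} : Set G.Vert) :=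
        Nat.card_le_card_of_injective _ hinj
      rw [Nat.card_coe_set_eq, hS0n] at hle
      have := hdeg3 u
      omega
    obtain ⟨duw, hduwt, hduwh⟩ := hduw
    have hg1np : ¬ PrivP (G.faceOf duw) := by
      intro hp
      have h := hpf_nomeet _ hp
      rw [Set.eq_empty_iff_forall_notMem] at h
      exact h duw ⟨rfl, by rw [hduwt]; exact huB⟩
    have hg2np : ¬ PrivP (G.faceOf (G.α duw)) := by
      intro hp
      have h := hpf_nomeet _ hp
      rw [Set.eq_empty_iff_forall_notMem] at h
      exact h (G.α duw) ⟨rfl, by rw [hduwh]; exact hwB⟩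
    have hg12 : G.faceOf duw ≠ G.faceOf (G.α duw) := hd.1 duw
    have hnotcard : (Finset.univ.filter (fun g => ¬ PrivP g)).card = 3 := by omega
    have hsub12 : ({G.faceOf duw, G.faceOf (G.α duw)} : Finset G.Face) ⊆
        Finset.univ.filter (fun g => ¬ PrivP g) := by
      intro g hg
      rcases Finset.mem_insert.1 hg with rfl | hg
      · exact Finset.mem_filter.2 ⟨Finset.mem_univ _, hg1np⟩
      · rw [Finset.mem_singleton.1 hg]
        exact Finset.mem_filter.2 ⟨Finset.mem_univ _, hg2np⟩
    have hcard12 : ({G.faceOf duw, G.faceOf (G.α duw)} : Finset G.Face).card = 2 := by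
      rw [Finset.card_insert_of_notMem (by simp [hg12]), Finset.card_singleton]
    have hpos : 0 < ((Finset.univ.filter (fun g => ¬ PrivP g)) \
        {G.faceOf duw, G.faceOf (G.α duw)}).card := by
      rw [Finset.card_sdiff_of_subset hsub12, hnotcard, hcard12]
      omega
    obtain ⟨g3, hg3mem⟩ := Finset.card_pos.1 hpos
    rw [Finset.mem_sdiff] at hg3mem
    obtain ⟨hg3f, hg3not⟩ := hg3mem
    have hg3np : ¬ PrivP g3 := (Finset.mem_filter.1 hg3f).2
    have hg3ne1 : g3 ≠ G.faceOf duw := fun h =>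
      hg3not (by rw [h]; exact Finset.mem_insert_self _ _)
    have hg3ne2 : g3 ≠ G.faceOf (G.α duw) := fun h =>
      hg3not (by rw [h]; exact Finset.mem_insert_of_mem (Finset.mem_singleton_self _))
    have ht2 : ({d | G.faceOf d = g3 ∧ G.vtx d ∈ G.cls {x, y} vB} : Set G.D).ncard = 2 :=
      hteq g3 hg3np
    obtain ⟨dB1, dB2, hdB12, hdBset⟩ := Set.ncard_eq_two.1 ht2
    have hdB1m : dB1 ∈ ({d | G.faceOf d = g3 ∧ G.vtx d ∈ G.cls {x, y} vB} : Set G.D) := by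
      rw [hdBset]; exact Set.mem_insert _ _
    have hdB2m : dB2 ∈ ({d | G.faceOf d = g3 ∧ G.vtx d ∈ G.cls {x, y} vB} : Set G.D) := by
      rw [hdBset]; exact Set.mem_insert_of_mem _ rfl
    have hheadB : ∀ dB, dB ∈ ({d | G.faceOf d = g3 ∧ G.vtx d ∈ G.cls {x, y} vB} : Set G.D) →
        G.vtx (G.α dB) ∈ ({x, y} : Set G.Vert) := by
      rintro dB ⟨hdBf, hdBB⟩
      by_contra hns
      have hh : G.vtx (G.α dB) ∈ G.cls {x, y} vB := head_mem_cls hs hdBB hns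
      have htl := hdBB
      rw [hBuw] at htl hh
      simp only [Set.mem_insert_iff, Set.mem_singleton_iff] at htl hh
      rcases htl with htl | htl <;> rcases hh with hh | hh
      · exact hs.1 dB (htl.trans hh.symm)
      · have hEq : dB = duw := dart_eq hs (by rw [htl, hduwt]) (by rw [hh, hduwh])
        rw [hEq] at hdBf
        exact hg3ne1 hdBf.symm
      · have hEq : dB = G.α duw := dart_eq hs (by rw [htl, hduwh])
          (by rw [alpha_alpha, hh, hduwt])
        rw [hEq] at hdBf
        exact hg3ne2 hdBf.symm
      · exact hs.1 dB (htl.trans hh.symm)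
    have hg3np' := hg3np
    simp only [hPrivdef] at hg3np'
    push_neg at hg3np'
    obtain ⟨d1, hd1f, hd1n⟩ := hg3np' vB hvBS
    rw [Set.mem_union, not_or] at hd1n
    obtain ⟨hd1B, hd1S⟩ := hd1n
    have hd1self : G.vtx d1 ∈ G.cls {x, y} (G.vtx d1) := mem_cls_self hd1S
    have hdisj : ∀ z, z ∈ G.cls {x, y} vB → z ∉ G.cls {x, y} (G.vtx d1) := by
      intro z h1 h2
      exact hd1B ((cls_eq_cls h1 h2) ▸ hd1self)
    have hd1dB1 : d1 ≠ dB1 := fun h => hd1B (h ▸ hdB1m.2)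
    have hd1dB2 : d1 ≠ dB2 := fun h => hd1B (h ▸ hdB2m.2)
    have hd1head : G.vtx (G.α d1) ∈ ({x, y} : Set G.Vert) := by
      by_contra hns
      have hh : G.vtx (G.α d1) ∈ G.cls {x, y} (G.vtx d1) := head_mem_cls hs hd1self hns
      have hphid1 : G.facePerm d1 ∈ ({d | G.faceOf d = g3 ∧
          G.vtx d ∈ G.cls {x, y} (G.vtx d1)} : Set G.D) :=
        ⟨by rw [faceOf_facePerm, hd1f], by rw [vtx_facePerm]; exact hh⟩
      obtain ⟨cs1, cs2, hcs1, hcs2, hcs12⟩ := exists_pair_of_two_le_ncard (hc2 g3 hg3np)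
      have hB1cs1 : dB1 ≠ cs1 := fun h => cls_not_mem hdB1m.2 (h ▸ hcs1.2)
      have hB1cs2 : dB1 ≠ cs2 := fun h => cls_not_mem hdB1m.2 (h ▸ hcs2.2)
      have hB2cs1 : dB2 ≠ cs1 := fun h => cls_not_mem hdB2m.2 (h ▸ hcs1.2)
      have hB2cs2 : dB2 ≠ cs2 := fun h => cls_not_mem hdB2m.2 (h ▸ hcs2.2)
      have hsub4 : ({dB1, dB2, cs1, cs2} : Set G.D) ⊆ {d | G.faceOf d = g3} := by
        rintro d (rfl | rfl | rfl | rfl)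
        · exact hdB1m.1
        · exact hdB2m.1
        · exact hcs1.1
        · exact hcs2.1
      have hc4 : ({dB1, dB2, cs1, cs2} : Set G.D).ncard = 4 := by
        rw [Set.ncard_insert_of_notMem (by simp [hdB12, hB1cs1, hB1cs2]) (Set.toFinite _),
          Set.ncard_insert_of_notMem (by simp [hB2cs1, hB2cs2]) (Set.toFinite _),
          Set.ncard_pair hcs12]
      have hsubC : ({d | G.faceOf d = g3 ∧ G.vtx d ∈ G.cls {x, y} (G.vtx d1)} : Set G.D) ⊆
          {d | G.faceOf d = g3} \ {dB1, dB2, cs1, cs2} := by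
        rintro d ⟨hdf, hdC⟩
        refine ⟨hdf, ?_⟩
        rintro (rfl | rfl | rfl | rfl)
        · exact hdisj _ hdB1m.2 hdC
        · exact hdisj _ hdB2m.2 hdC
        · exact cls_not_mem hdC hcs1.2
        · exact cls_not_mem hdC hcs2.2
      have hle1 : ({d | G.faceOf d = g3 ∧
          G.vtx d ∈ G.cls {x, y} (G.vtx d1)} : Set G.D).ncard ≤ 1 := by
        calc ({d | G.faceOf d = g3 ∧ G.vtx d ∈ G.cls {x, y} (G.vtx d1)} : Set G.D).ncard
            ≤ (({d | G.faceOf d = g3} : Set G.D) \ {dB1, dB2, cs1, cs2}).ncard :=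
              Set.ncard_le_ncard hsubC (Set.toFinite _)
          _ ≤ 1 := by rw [Set.ncard_diff hsub4 (Set.toFinite _), hc4, hfib5]
      exact hphi d1 (mem_eq_of_ncard_le_one hle1 hphid1 ⟨hd1f, hd1self⟩)
    have h3heads : 3 ≤ ({d | G.faceOf d = g3 ∧
        G.vtx (G.α d) ∈ ({x, y} : Set G.Vert)} : Set G.D).ncard :=
      three_le_ncard_of_mem hdB12 (Ne.symm hd1dB1) (Ne.symm hd1dB2)
        ⟨hdB1m.1, hheadB dB1 hdB1m⟩ ⟨hdB2m.1, hheadB dB2 hdB2m⟩ ⟨hd1f, hd1head⟩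
    rw [hbal g3] at h3heads
    have hdisjBS : Disjoint ({d | G.faceOf d = g3 ∧ G.vtx d ∈ G.cls {x, y} vB} : Set G.D)
        ({d | G.faceOf d = g3 ∧ G.vtx d ∈ ({x, y} : Set G.Vert)} : Set G.D) := by
      rw [Set.disjoint_left]
      rintro d ⟨hdg, hdB⟩ ⟨hdg2, hdS⟩
      exact cls_not_mem hdB hdS
    have hdisj1 : Disjoint (({d | G.faceOf d = g3 ∧ G.vtx d ∈ G.cls {x, y} vB} : Set G.D) ∪
        {d | G.faceOf d = g3 ∧ G.vtx d ∈ ({x, y} : Set G.Vert)}) {d1} := by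
      rw [Set.disjoint_right]
      rintro d rfl
      rintro (⟨hdg, hdB⟩ | ⟨hdg, hdS⟩)
      · exact hd1B hdB
      · exact hd1S hdS
    have hsubU : (({d | G.faceOf d = g3 ∧ G.vtx d ∈ G.cls {x, y} vB} : Set G.D) ∪
        {d | G.faceOf d = g3 ∧ G.vtx d ∈ ({x, y} : Set G.Vert)}) ∪ {d1} ⊆
        {d | G.faceOf d = g3} := by
      rintro d ((⟨h, hd2'⟩ | ⟨h, hd2'⟩) | rfl)
      · exact h
      · exact h
      · exact hd1f
    have hUle := Set.ncard_le_ncard hsubU (Set.toFinite _)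
    rw [Set.ncard_union_eq hdisj1 (Set.toFinite _) (Set.toFinite _),
      Set.ncard_union_eq hdisjBS (Set.toFinite _) (Set.toFinite _),
      ht2, Set.ncard_singleton, hfib5] at hUle
    omega

end EmbGraph
/-- a simple graph embedded on the torus with a `2`-cut and a
simple dual has a vertex cut of size at most `5` in the dual. -/
theorem torus_two_cut_dual_cut_five
    (G : EmbGraph) (hconn : G.Connected) (hsimple : G.IsSimple)
    (heuler : G.eulerChar = 0)
    (hcut : ∃ S : Set G.Vert, S.ncard = 2 ∧ IsCutSet G.underlying S)
    (hdual : G.DualSimple) :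
    ∃ S : Set G.Face, S.ncard ≤ 5 ∧ IsCutSet G.dualGraph S := by
  classical
  letI : Fintype G.D := Fintype.ofFinite _
  letI : Fintype G.Vert := Fintype.ofFinite _
  letI : Fintype G.Edge := Fintype.ofFinite _
  letI : Fintype G.Face := Fintype.ofFinite _
  by_contra hcon
  push_neg at hcon
  -- witnesses of the primal cut
  obtain ⟨S0, hS02, a, b, hnr⟩ := hcut
  have hcut' : ∃ S : Set G.Vert, S.ncard = 2 ∧ IsCutSet G.underlying S :=
    ⟨S0, hS02, a, b, hnr⟩
  have hab : (a : G.Vert) ≠ (b : G.Vert) := by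
    intro h
    exact hnr (Subtype.ext h ▸ SimpleGraph.Reachable.refl a)
  -- four distinct vertices
  have hv4 : 4 ≤ Nat.card G.Vert := by
    obtain ⟨x, y, hxy, hS0⟩ := Set.ncard_eq_two.1 hS02
    have hax : (a : G.Vert) ≠ x := fun h => a.2 (by simp [hS0, h])
    have hay : (a : G.Vert) ≠ y := fun h => a.2 (by simp [hS0, h])
    have hbx : (b : G.Vert) ≠ x := fun h => b.2 (by simp [hS0, h])
    have hby : (b : G.Vert) ≠ y := fun h => b.2 (by simp [hS0, h])
    have h4 : ({(a : G.Vert), (b : G.Vert), x, y} : Set G.Vert).ncard = 4 := by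
      rw [Set.ncard_insert_of_notMem (by simp [hab, hax, hay]),
        Set.ncard_insert_of_notMem (by simp [hbx, hby]),
        Set.ncard_pair hxy]
    calc 4 = ({(a : G.Vert), (b : G.Vert), x, y} : Set G.Vert).ncard := h4.symm
      _ ≤ (Set.univ : Set G.Vert).ncard :=
          Set.ncard_le_ncard (Set.subset_univ _) (Set.toFinite _)
      _ = Nat.card G.Vert := Set.ncard_univ _
  have hVne : Nonempty G.Vert := ⟨a⟩
  have hDne : Nonempty G.D := by
    obtain ⟨d, -⟩ := EmbGraph.exists_dart (a : G.Vert)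
    exact ⟨d⟩
  have hD1 : 1 ≤ Nat.card G.D := Nat.card_pos
  have hdeg3 : ∀ v, 3 ≤ G.degree v := EmbGraph.three_le_degree hsimple hdual
  have hsum_deg : Nat.card G.D = ∑ v : G.Vert, G.degree v := EmbGraph.card_D_eq_sum_degree
  have hsum_fs : Nat.card G.D = ∑ f : G.Face, G.faceSize f := EmbGraph.card_D_eq_sum_faceSize
  have h2e : Nat.card G.D = 2 * Nat.card G.Edge := EmbGraph.card_D_eq_two_mul_edges
  have h3v : 3 * Nat.card G.Vert ≤ Nat.card G.D := by
    rw [hsum_deg]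
    calc 3 * Nat.card G.Vert = ∑ _v : G.Vert, 3 := by
          rw [Finset.sum_const, smul_eq_mul, Finset.card_univ, Nat.card_eq_fintype_card, mul_comm]
      _ ≤ ∑ v : G.Vert, G.degree v := Finset.sum_le_sum fun v _ => hdeg3 v
  have heuler' : Nat.card G.Vert + Nat.card G.Face = Nat.card G.Edge := by
    have h := heuler
    unfold EmbGraph.eulerChar EmbGraph.numVertices EmbGraph.numEdges EmbGraph.numFaces at h
    omega
  by_cases hcomp : ∀ f g : G.Face, f ≠ g → G.dualGraph.Adj f g
  · -- complete dual
    have hfs : ∀ f, G.faceSize f + 1 = Nat.card G.Face :=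
      EmbGraph.faceSize_complete hdual hcomp
    have hDF : Nat.card G.D + Nat.card G.Face = Nat.card G.Face * Nat.card G.Face := by
      calc Nat.card G.D + Nat.card G.Face
          = (∑ f : G.Face, G.faceSize f) + ∑ _f : G.Face, 1 := by
            rw [← hsum_fs, Finset.sum_const, smul_eq_mul, mul_one, Finset.card_univ,
              Nat.card_eq_fintype_card, Nat.card_eq_fintype_card]
        _ = ∑ f : G.Face, (G.faceSize f + 1) := by rw [Finset.sum_add_distrib]
        _ = ∑ _f : G.Face, Nat.card G.Face := by
            exact Finset.sum_congr rfl fun f _ => hfs f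
        _ = Nat.card G.Face * Nat.card G.Face := by
            rw [Finset.sum_const, smul_eq_mul, Finset.card_univ, Nat.card_eq_fintype_card]
    have hFne : Nonempty G.Face := ⟨G.faceOf (Classical.choice hDne)⟩
    have hF1 : 1 ≤ Nat.card G.Face := Nat.card_pos
    have hF7 : Nat.card G.Face ≤ 7 := by
      by_contra hgt
      push_neg at hgt
      have h8 : 8 ≤ Nat.card G.Face := hgt
      have hmul : 8 * Nat.card G.Face ≤ Nat.card G.Face * Nat.card G.Face :=
        Nat.mul_le_mul_right _ h8
      omega
    -- case on the number of faces
    have hcases : Nat.card G.Face = 5 ∨ Nat.card G.Face = 6 ∨ Nat.card G.Face = 7 := by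
      rcases Nat.lt_or_ge (Nat.card G.Face) 5 with h | h
      · exfalso
        interval_cases h : (Nat.card G.Face) <;> omega
      · omega
    rcases hcases with hF | hF | hF
    · -- K5
      have hv5 : Nat.card G.Vert = 5 := by rw [hF] at hDF; omega
      have hE10 : Nat.card G.Edge = 10 := by rw [hF] at hDF; omega
      have hadj := EmbGraph.five_vertices_complete hsimple hv5 hE10 a b hab
      refine hnr (SimpleGraph.Adj.reachable ?_)
      rw [SimpleGraph.comap_adj]
      exact hadj
    · -- F = 6 : the hard case
      have hv9 : Nat.card G.Vert = 9 := by rw [hF] at hDF; omega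
      have hD30 : Nat.card G.D = 30 := by rw [hF] at hDF; omega
      have hfs5 : ∀ f, G.faceSize f = 5 := by
        intro f
        have := hfs f
        rw [hF] at this
        omega
      exact EmbGraph.six_faces_contradiction hconn hsimple hdual hcomp hF hv9 hD30 hfs5
        hdeg3 hcut'
    · -- F = 7 : cubic
      have hv14 : Nat.card G.Vert = 14 := by rw [hF] at hDF; omega
      have hD42 : Nat.card G.D = 42 := by rw [hF] at hDF; omega
      have hcubic : ∀ v, G.degree v = 3 := by
        refine sum_eq_extract G.degree 3 hdeg3 ?_
        rw [← hsum_deg, hD42, ← Nat.card_eq_fintype_card, hv14]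
      exact EmbGraph.cubic_no_two_cut hconn hsimple hdual hcubic hcut'
  · -- non-complete dual
    push_neg at hcomp
    obtain ⟨f0, g0, hfg, hnadj⟩ := hcomp
    have hF8 : 8 ≤ Nat.card G.Face := by
      by_contra hlt
      push_neg at hlt
      have hcutF : IsCutSet G.dualGraph ({f0, g0}ᶜ : Set G.Face) := by
        refine isCutSet_of_isolated _ _ f0 g0 (by simp) (by simp) hfg.symm ?_
        intro w hw
        rw [Set.notMem_compl_iff] at hw
        rcases hw with rfl | rfl
        · exact G.dualGraph.irrefl
        · exact hnadj
      refine hcon _ ?_ hcutF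
      have hcc := Set.ncard_add_ncard_compl ({f0, g0} : Set G.Face)
      rw [Set.ncard_pair hfg] at hcc
      have : Nat.card G.Face ≤ 7 := by omega
      omega
    have hfs6 : ∀ f, 6 ≤ G.faceSize f := by
      intro f
      by_contra hlt
      push_neg at hlt
      have hnb5 : {g | G.dualGraph.Adj f g}.ncard ≤ 5 := by
        have := EmbGraph.nbhd_ncard_le_faceSize f
        omega
      have hex : ∃ g1, g1 ∉ ({g | G.dualGraph.Adj f g} ∪ {f} : Set G.Face) := by
        by_contra hall
        push_neg at hall
        have hsub : (Set.univ : Set G.Face) ⊆ {g | G.dualGraph.Adj f g} ∪ {f} :=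
          fun g _ => hall g
        have h1 : (Set.univ : Set G.Face).ncard ≤ 6 := by
          calc (Set.univ : Set G.Face).ncard
              ≤ ({g | G.dualGraph.Adj f g} ∪ {f} : Set G.Face).ncard :=
                Set.ncard_le_ncard hsub (Set.toFinite _)
            _ ≤ {g | G.dualGraph.Adj f g}.ncard + ({f} : Set G.Face).ncard :=
                Set.ncard_union_le _ _
            _ ≤ 6 := by rw [Set.ncard_singleton]; omega
        rw [Set.ncard_univ] at h1
        omega
      obtain ⟨g1, hg1⟩ := hex
      have hg1n : g1 ∉ {g | G.dualGraph.Adj f g} := fun h => hg1 (Or.inl h)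
      have hg1f : g1 ≠ f := fun h => hg1 (Or.inr h)
      have hcutF : IsCutSet G.dualGraph {g | G.dualGraph.Adj f g} := by
        refine isCutSet_of_isolated _ _ f g1 (fun h => G.dualGraph.irrefl h) hg1n hg1f ?_
        intro w hw
        exact hw
      exact hcon _ hnb5 hcutF
    have h6F : 6 * Nat.card G.Face ≤ Nat.card G.D := by
      rw [hsum_fs]
      calc 6 * Nat.card G.Face = ∑ _f : G.Face, 6 := by
            rw [Finset.sum_const, smul_eq_mul, Finset.card_univ, Nat.card_eq_fintype_card, mul_comm]
        _ ≤ ∑ f : G.Face, G.faceSize f := Finset.sum_le_sum fun f _ => hfs6 f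
    have hD3v : Nat.card G.D = 3 * Nat.card G.Vert := by omega
    have hcubic : ∀ v, G.degree v = 3 := by
      refine sum_eq_extract G.degree 3 hdeg3 ?_
      rw [← hsum_deg, hD3v, ← Nat.card_eq_fintype_card]
    exact EmbGraph.cubic_no_two_cut hconn hsimple hdual hcubic hcut'
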